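/- Let Γ ⊢ M : T be a simply-typed term-in-context and let ⌊M⌋ denote its eta-long form with respect to T. Then the set of STLC traversals of ⌊M⌋ (generated by the rules of Table 1 excluding rule Lam^ghost and the eta-expanded subcases of rules Var and IVar) equals the set of traversals of ⌊M⌋ generated by the rules of Table 1 excluding only the eta-expanded subcase of rule IVar; in particular, the condition i > |m| in rule Var never arises while traversing ⌊M⌋ and no traversal in this set contains a ghost node. -/

import Mathlib

set_option maxHeartbeats 1000000

namespace ULC

/-- Variable names. -/
abbrev Name := Nat
/-- Positions (directed paths) in trees / terms. -/
abbrev Pos := List Nat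

/-! ## Untyped lambda terms `Λ ::= x | (Λ Λ) | λx.Λ` -/

inductive Term where
  | var : Name → Term
  | app : Term → Term → Term
  | lam : Name → Term → Term
deriving DecidableEq

namespace Term

/-- Free variables of a term. -/
def fv : Term → List Name
  | var x => [x]
  | app u v => fv u ++ fv v
  | lam x u => (fv u).filter (· != x)

def size : Term → Nat
  | var _ => 1
  | app u v => size u + size v + 1
  | lam _ u => size u + 1

/-- Naive renaming of a free variable (used only with a fresh target). -/
def rename (y z : Name) : Term → Term
  | var w => var (if w = y then z else w)
  | app u v => app (rename y z u) (rename y z v)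
  | lam w u => if w = y then lam w u else lam w (rename y z u)

theorem size_rename (y z : Name) : ∀ t : Term, (t.rename y z).size = t.size := by
  intro t
  induction t with
  | var w => simp [rename, size]
  | app u v ihu ihv => simp [rename, size, ihu, ihv]
  | lam w u ih => by_cases h : w = y <;> simp [rename, size, h, ih]

/-- A name fresh for a given list of names. -/
def fresh (l : List Name) : Name := l.foldr max 0 + 1

/-- Capture-avoiding substitution `subst x s t = t[x := s]`. -/
def subst (x : Name) (s : Term) : Term → Term
  | var y => if y = x then s else var y
  | app u v => app (subst x s u) (subst x s v)
  | lam y u =>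
      if y = x then lam y u
      else if y ∈ s.fv ∧ x ∈ u.fv then
        let z := fresh (s.fv ++ u.fv ++ [x, y])
        lam z (subst x s (u.rename y z))
      else lam y (subst x s u)
termination_by t => t.size
decreasing_by
  all_goals simp only [size, size_rename]
  all_goals omega

end Term

/-! ## Beta reduction, alpha conversion -/

/-- One step of β-reduction. -/
inductive Beta : Term → Term → Prop where
  | redex (x : Name) (u v : Term) :
      Beta (.app (.lam x u) v) (Term.subst x v u)
  | appL {u u' : Term} (v : Term) : Beta u u' → Beta (.app u v) (.app u' v)
  | appR (u : Term) {v v' : Term} : Beta v v' → Beta (.app u v) (.app u v')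
  | lamC (x : Name) {u u' : Term} : Beta u u' → Beta (.lam x u) (.lam x u')

/-- α-equivalence. -/
inductive Alpha : Term → Term → Prop where
  | var (x : Name) : Alpha (.var x) (.var x)
  | app {u u' v v' : Term} :
      Alpha u u' → Alpha v v' → Alpha (.app u v) (.app u' v')
  | lam {x y : Name} {u u' : Term} :
      (∀ z, z ∉ u.fv → z ∉ u'.fv → Alpha (u.rename x z) (u'.rename y z)) →
      Alpha (.lam x u) (.lam y u')

/-- Many-step β-reduction. -/
def BetaStar : Term → Term → Prop := Relation.ReflTransGen Beta

/-- β-equivalence (as usual in the named λ-calculus, modulo α-conversion). -/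
def BetaEq : Term → Term → Prop :=
  Relation.EqvGen (fun a b => Beta a b ∨ Alpha a b)

/-- β-normal form: no redex, i.e. no β-step possible. -/
def IsBetaNormal (t : Term) : Prop := ∀ u, ¬ Beta t u

/-- `t` has a β-normal form. -/
def HasBnf (t : Term) : Prop := ∃ n, BetaStar t n ∧ IsBetaNormal n

/-! ## Head lambda-list, generalized redexes, lloc -/

namespace Term

/-- The head lambda-list `λ_l`. -/
def lamList : Term → List Name
  | var _ => []
  | lam x u => x :: lamList u
  | app u _ => (lamList u).tail

/-- Subterm at a position (0 = under a λ or operator of an app, 1 = operand). -/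
def subtermAt : Term → Pos → Option Term
  | t, [] => some t
  | lam _ u, 0 :: p => subtermAt u p
  | app u _, 0 :: p => subtermAt u p
  | app _ v, 1 :: p => subtermAt v p
  | _, _ => none

/-- Replace the subterm at a position. -/
def replaceAt : Term → Pos → Term → Term
  | _, [], s => s
  | lam x u, 0 :: p, s => lam x (replaceAt u p s)
  | app u v, 0 :: p, s => app (replaceAt u p s) v
  | app u v, 1 :: p, s => app u (replaceAt v p s)
  | t, _, _ => t

/-- Positions of the abstractions listed in the head lambda-list. -/
def lamListPos : Term → List Pos
  | var _ => []
  | lam _ u => ([] : Pos) :: (lamListPos u).map (fun q => 0 :: q)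
  | app u _ => ((lamListPos u).map (fun q => 0 :: q)).tail

/-- Generalized redexes: pairs (position of the λ-abstraction occurrence,
position of its argument). -/
def gr : Term → List (Pos × Pos)
  | var _ => []
  | lam _ u => (gr u).map (fun r => (0 :: r.1, 0 :: r.2))
  | app u v =>
      (match lamListPos u with
        | [] => []
        | q :: _ => [((0 :: q : Pos), ([1] : Pos))]) ++
      (gr u).map (fun r => (0 :: r.1, 0 :: r.2)) ++
      (gr v).map (fun r => (1 :: r.1, 1 :: r.2))

/-- Position of the binder of the variable occurrence at `p` (if bound). -/
def binderAux : Term → Pos → Pos → List (Name × Pos) → Option Pos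
  | var x, [], _, env => env.lookup x
  | lam y u, 0 :: p, cur, env => binderAux u p (cur ++ [0]) ((y, cur) :: env)
  | app u _, 0 :: p, cur, env => binderAux u p (cur ++ [0]) env
  | app _ v, 1 :: p, cur, env => binderAux v p (cur ++ [1]) env
  | _, _, _, _ => none

def binderOf (M : Term) (p : Pos) : Option Pos := binderAux M p [] []

/-- The variable occurrence at `p` is involved in a generalized redex of `M`. -/
def involvedB (M : Term) (p : Pos) : Bool :=
  M.gr.any (fun r => binderOf M p == some r.1)

def Involved (M : Term) (p : Pos) : Prop := involvedB M p = true

/-- The leftmost linear occurrence `lloc`. -/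
def llocAux (M : Term) : Term → Pos → Option Pos
  | var _, p => if involvedB M p then some p else none
  | lam _ u, p => llocAux M u (p ++ [0])
  | app u v, p =>
      match llocAux M u (p ++ [0]) with
      | some q => some q
      | none => if u.lamList = [] then llocAux M v (p ++ [1]) else none

def lloc (M : Term) : Option Pos := llocAux M M []

end Term

/-- Quasi normal form: no leftmost linear occurrence. -/
def Qnf (M : Term) : Prop := M.lloc = none

/-- Names bound somewhere in the term. -/
def Term.bndrs : Term → List Name
  | .var _ => []
  | .app u v => u.bndrs ++ v.bndrs
  | .lam x u => x :: u.bndrs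

/-- Barendregt convention: binder names are pairwise distinct and disjoint
from the free names. -/
def Barendregt (M : Term) : Prop :=
  M.bndrs.Nodup ∧ ∀ x ∈ M.bndrs, x ∉ M.fv

/-- One step of leftmost linear reduction: linearly fire the generalized
redex involving the lloc (working up to α-conversion, which realizes the
capture-avoiding renaming). -/
def LinStep (M N : Term) : Prop :=
  ∃ M', Alpha M M' ∧ Barendregt M' ∧
    ∃ p lp ap A, M'.lloc = some p ∧ Term.binderOf M' p = some lp ∧
      (lp, ap) ∈ M'.gr ∧ Term.subtermAt M' ap = some A ∧
      Alpha N (Term.replaceAt M' p A)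

/-- Firing a trivial redex `(λx.u)A` with `x ∉ fv u`. -/
def TrivStep (M N : Term) : Prop :=
  ∃ p x u A, Term.subtermAt M p = some (.app (.lam x u) A) ∧ x ∉ u.fv ∧
    N = Term.replaceAt M p u

def IsRedexAt (M : Term) (p : Pos) : Prop :=
  ∃ x u A, Term.subtermAt M p = some (.app (.lam x u) A)

def HasRedex (M : Term) : Prop := ∃ p, IsRedexAt M p

/-- `q` occurs (strictly) to the left of `p`. -/
def PosLeft (q p : Pos) : Prop :=
  (∃ r a b s₁ s₂, q = r ++ a :: s₁ ∧ p = r ++ b :: s₂ ∧ a < b) ∨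
  (q ≠ p ∧ q <+: p)

/-- A spinal-innermost redex: a β-redex whose operator body has no redex. -/
def SpinalInnermostAt (M : Term) (p : Pos) : Prop :=
  ∃ x u A, Term.subtermAt M p = some (.app (.lam x u) A) ∧ ¬ HasRedex u

/-- The leftmost spinal-innermost redex of `M` is at `p`. -/
def LSIAt (M : Term) (p : Pos) : Prop :=
  SpinalInnermostAt M p ∧ ∀ q, SpinalInnermostAt M q → ¬ PosLeft q p

/-- One step of the leftmost spinal-innermost reduction strategy. -/
def LSIStep (M N : Term) : Prop :=
  ∃ p x u A, LSIAt M p ∧ Term.subtermAt M p = some (.app (.lam x u) A) ∧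
    N = Term.replaceAt M p (Term.subst x A u)

/-! ## Head occurrence, hoc arguments, head reduction -/

/-- Position of the head (leftmost) variable occurrence. -/
def Term.hocPos : Term → Pos
  | .var _ => []
  | .lam _ u => 0 :: u.hocPos
  | .app u _ => 0 :: u.hocPos

/-- Quasi-head-normal form: the hoc is not involved in a generalized redex. -/
def Qhnf (M : Term) : Prop := ¬ Term.Involved M M.hocPos

/-- The arguments of the head variable occurrence. -/
def Term.args : Term → List Term
  | .var _ => []
  | .lam _ u => u.args
  | .app u v => if u.lamList = [] then u.args ++ [v] else u.args

def Term.headIsVar : Term → Prop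
  | .var _ => True
  | .app u _ => u.headIsVar
  | .lam _ _ => False

/-- Head normal form `λ x₁…xₙ. y A₁ … A_m`. -/
def IsHnf : Term → Prop
  | .var _ => True
  | .app u _ => u.headIsVar
  | .lam _ u => IsHnf u

/-- One step of head reduction. -/
inductive HeadStep : Term → Term → Prop where
  | redex (x : Name) (u v : Term) :
      HeadStep (.app (.lam x u) v) (Term.subst x v u)
  | lamC (x : Name) {u u' : Term} : HeadStep u u' → HeadStep (.lam x u) (.lam x u')
  | appL {u u' : Term} (v : Term) :
      (∀ y w, u ≠ .lam y w) → HeadStep u u' → HeadStep (.app u v) (.app u' v)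

/-- Number of arguments applied to the head variable. -/
def Term.headArgCount : Term → Nat
  | .var _ => 0
  | .lam _ u => u.headArgCount
  | .app u _ => u.headArgCount + 1

/-! ## Simple types and eta-long forms -/

inductive Ty where
  | base : Ty
  | arrow : Ty → Ty → Ty
deriving DecidableEq

mutual
/-- `ELong Γ M A`: `M` is a simply-typed term in η-long form of type `A`. -/
inductive ELong : List (Name × Ty) → Term → Ty → Prop where
  | arrow {Γ x A B U} : ELong ((x, A) :: Γ) U B → ELong Γ (.lam x U) (.arrow A B)
  | base {Γ M} : ESpine Γ M .base → ELong Γ M .base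

/-- Spines: a head (variable or abstraction) applied to η-long arguments. -/
inductive ESpine : List (Name × Ty) → Term → Ty → Prop where
  | var {Γ x A} : Γ.lookup x = some A → ESpine Γ (.var x) A
  | head {Γ x U A B} : ELong Γ (.lam x U) (.arrow A B) → ESpine Γ (.lam x U) (.arrow A B)
  | app {Γ U V A B} : ESpine Γ U (.arrow A B) → ELong Γ V A → ESpine Γ (.app U V) B
end

/-! ## Computation trees -/

/-- Node kinds of the computation tree. -/
inductive NKind where
  | lam | var | app
deriving DecidableEq

/-- Node labels of the computation tree. -/
inductive NLabel where
  | lam : List Name → NLabel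
  | var : Name → NLabel
  | app : NLabel
deriving DecidableEq

/-- Computation trees: bulk λ-nodes (with one child), variable nodes (with
λ-node children) and @-nodes (operator + operand λ-node children). -/
inductive CT where
  | lam : List Name → CT → CT
  | var : Name → List CT → CT
  | app : CT → List CT → CT

instance : Inhabited CT := ⟨.var 0 []⟩

namespace CT

def kind : CT → NKind
  | .lam _ _ => .lam
  | .var _ _ => .var
  | .app _ _ => .app

def labelOf : CT → NLabel
  | .lam xs _ => .lam xs
  | .var z _ => .var z
  | .app _ _ => .app

/-- Arity of a node: number of bound variables / children / operands. -/
def arity : CT → Nat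
  | .lam xs _ => xs.length
  | .var _ cs => cs.length
  | .app _ cs => cs.length

/-- The subtree rooted at a given path.  A λ-node's unique child has index 1;
the operator of an @-node has index 0 and its operands indices 1,…; the
children of a variable node have indices 1,…. -/
def nodeAt : CT → Pos → Option CT
  | t, [] => some t
  | .lam _ c, 1 :: p => nodeAt c p
  | .var _ cs, (k + 1) :: p =>
      match cs[k]? with
      | some c => nodeAt c p
      | none => none
  | .app op _, 0 :: p => nodeAt op p
  | .app _ cs, (k + 1) :: p =>
      match cs[k]? with
      | some c => nodeAt c p
      | none => none
  | _, _ => none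

end CT

mutual
def namesCT : CT → List Name
  | .lam xs c => xs ++ namesCT c
  | .var z cs => z :: namesL cs
  | .app op cs => namesCT op ++ namesL cs
def namesL : List CT → List Name
  | [] => []
  | c :: cs => namesCT c ++ namesL cs
end

mutual
def freeNamesCT : CT → List Name
  | .lam xs c => (freeNamesCT c).filter (fun z => ! xs.contains z)
  | .var z cs => z :: freeNamesL cs
  | .app op cs => freeNamesCT op ++ freeNamesL cs
def freeNamesL : List CT → List Name
  | [] => []
  | c :: cs => freeNamesCT c ++ freeNamesL cs
end

/-- Canonical enumeration of the free variables of the tree. -/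
def freeListCT (T : CT) : List Name := (freeNamesCT T).dedup

/-! ### The computation tree of a term -/

mutual
/-- The body node (variable or @) of the computation tree of a term. -/
def ctreeB : Term → CT
  | .var z => .var z []
  | .lam x u =>
      .app (match ctreeL u with
            | .lam xs c => CT.lam (x :: xs) c
            | c => CT.lam [x] c) []
  | .app u v =>
      match ctreeB u with
      | .var z cts => .var z (cts ++ [ctreeL v])
      | .app op cts => .app op (cts ++ [ctreeL v])
      | c => c
termination_by t => 2 * t.size
decreasing_by all_goals (simp only [Term.size]; omega)
/-- The computation tree of a term (rooted at a bulk λ-node). -/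
def ctreeL : Term → CT
  | .lam x u =>
      match ctreeL u with
      | .lam xs c => .lam (x :: xs) c
      | c => .lam [x] c
  | .var z => .lam [] (.var z [])
  | .app u v => .lam [] (ctreeB (.app u v))
termination_by t => 2 * t.size + 1
decreasing_by all_goals (simp only [Term.size]; omega)
end

def ctree (M : Term) : CT := ctreeL M

/-! ### Binders in the computation tree -/

/-- `binderGo` walks a path maintaining the binding environment; returns the
(binder position, binding index) of the variable node at the end of the path. -/
def binderGo : CT → Pos → Pos → List (Name × (Pos × Nat)) → Option (Pos × Nat)
  | .var z _, [], _, env => env.lookup z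
  | .lam xs c, 1 :: p, cur, env =>
      binderGo c p (cur ++ [1])
        ((((xs.zipIdx.map Prod.swap).map (fun e => (e.2, (cur, e.1 + 1)))).reverse) ++ env)
  | .var _ cs, (k + 1) :: p, cur, env =>
      match cs[k]? with
      | some c => binderGo c p (cur ++ [k + 1]) env
      | none => none
  | .app op _, 0 :: p, cur, env => binderGo op p (cur ++ [0]) env
  | .app _ cs, (k + 1) :: p, cur, env =>
      match cs[k]? with
      | some c => binderGo c p (cur ++ [k + 1]) env
      | none => none
  | _, _, _, _ => none

/-- Binder (with binding index) of a variable node in the computation tree. -/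
def binderInCT (T : CT) (q : Pos) : Option (Pos × Nat) := binderGo T q [] []

/-! ### Generalized redexes at the level of computation trees -/

def seqPre (k : Nat) (l : List (Pos × Nat)) : List (Pos × Nat) :=
  l.map (fun s => (k :: s.1, s.2))

/-- The slots (binder position, binding index) of the head lambda-list. -/
def ctLamSlots : CT → List (Pos × Nat)
  | .lam xs c =>
      (List.range xs.length).map (fun j => (([] : Pos), j + 1))
        ++ seqPre 1 (ctLamSlots c)
  | .var _ _ => []
  | .app op cs => (seqPre 0 (ctLamSlots op)).drop cs.length

def preRedex (k : Nat) (l : List ((Pos × Nat) × (Pos × Nat))) :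
    List ((Pos × Nat) × (Pos × Nat)) :=
  l.map (fun r => ((k :: r.1.1, r.1.2), (k :: r.2.1, r.2.2)))

mutual
/-- Generalized redexes of a computation tree: pairs of a lambda slot
(binder position, binding index) and an argument (position of the @-node
where it is consumed, operand index). -/
def ctGr : CT → List ((Pos × Nat) × (Pos × Nat))
  | .lam _ c => preRedex 1 (ctGr c)
  | .var _ cs => ctGrL 1 cs
  | .app op cs =>
      ((((seqPre 0 (ctLamSlots op)).take cs.length).zipIdx.map Prod.swap).map
        (fun e => (e.2, (([] : Pos), e.1 + 1))))
      ++ preRedex 0 (ctGr op) ++ ctGrL 1 cs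
def ctGrL : Nat → List CT → List ((Pos × Nat) × (Pos × Nat))
  | _, [] => []
  | k, c :: cs => preRedex k (ctGr c) ++ ctGrL (k + 1) cs
end

/-- The variable node at `q` is involved in a generalized redex of `T`. -/
def involvedCT (T : CT) (q : Pos) : Bool :=
  match binderInCT T q with
  | some bi => (ctGr T).any (fun r => r.1 == bi)
  | none => false

/-- Length of the head lambda-list of (the term denoted by) a tree. -/
def ctLamLen : CT → Nat
  | .lam xs c => xs.length + ctLamLen c
  | .var _ _ => 0
  | .app op cs => ctLamLen op - cs.length

mutual
/-- The lloc of the subtree `t` of `T` located at absolute position `q`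
(involvement is computed with respect to the whole tree `T`). -/
def llocCT (T : CT) : CT → Pos → Option Pos
  | .lam _ c, q => llocCT T c (q ++ [1])
  | .var _ cs, q =>
      if involvedCT T q then some q else llocArgs T cs q 0 1
  | .app op cs, q =>
      match llocCT T op (q ++ [0]) with
      | some r => some r
      | none => llocArgs T cs q (ctLamLen op) 1
def llocArgs (T : CT) : List CT → Pos → Nat → Nat → Option Pos
  | [], _, _, _ => none
  | a :: rest, q, l, k =>
      if l = 0 then
        match llocCT T a (q ++ [k]) with
        | some r => some r
        | none => llocArgs T rest q 0 (k + 1)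
      else llocArgs T rest q (l - 1) (k + 1)
end

/-- The lloc of the subterm rooted at node `p` of the tree `T`. -/
def llocNode (T : CT) (p : Pos) : Option Pos :=
  match T.nodeAt p with
  | some sub => llocCT T sub p
  | none => none
/-! ## Extended nodes: structural nodes and ghost nodes -/

/-- Extended nodes: structural nodes (paths of the computation tree) and
ghost nodes, determined by their enabler and a label `k` exceeding its arity. -/
inductive ENode where
  | s : Pos → ENode
  | g : ENode → Nat → ENode
deriving DecidableEq

instance : Inhabited ENode := ⟨.s []⟩

def kindAt (T : CT) (p : Pos) : Option NKind := (T.nodeAt p).map CT.kind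

def arityAt (T : CT) (p : Pos) : Nat := ((T.nodeAt p).map CT.arity).getD 0

/-- Bound variables of the λ-node at `p`. -/
def boundAt (T : CT) (p : Pos) : List Name :=
  match T.nodeAt p with
  | some (.lam xs _) => xs
  | _ => []

namespace ENode

/-- Kind of an extended node (ghosts alternate kinds with their enabler). -/
def kindIn (T : CT) : ENode → Option NKind
  | .s p => kindAt T p
  | .g e _ =>
      match e.kindIn T with
      | some .lam => some .var
      | some _ => some .lam
      | none => none

/-- Arity of an extended node (ghost nodes have arity 0). -/
def arityIn (T : CT) : ENode → Nat
  | .s p => arityAt T p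
  | .g _ _ => 0

def isGhost : ENode → Bool
  | .s _ => false
  | .g _ _ => true

end ENode

/-- The unique enabler of a structural node: λ-nodes are enabled by their
parent (with the child index as label), variable nodes by their binder (with
the binding index) or by the root (with a label indexing the free variable
beyond the root's arity); @-nodes have no enabler. -/
def enablerF (T : CT) (p : Pos) : Option (Pos × Nat) :=
  match T.nodeAt p with
  | none => none
  | some (.app _ _) => none
  | some (.lam _ _) =>
      if h : p = [] then none else some (p.dropLast, p.getLast h)
  | some (.var z _) =>
      match binderInCT T p with
      | some b => some b
      | none => some (([] : Pos), arityAt T [] + 1 + (freeListCT T).idxOf z)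

/-- Structural enabling relation `bp ⊢_k q`. -/
def EnablesS (T : CT) (bp : Pos) (k : Nat) (q : Pos) : Prop :=
  (q = bp ++ [k] ∧ (T.nodeAt q).isSome = true ∧
    (kindAt T bp = some .var ∨ kindAt T bp = some .app))
  ∨ (kindAt T q = some .var ∧ binderInCT T q = some (bp, k))
  ∨ (binderInCT T q = none ∧ bp = [] ∧
      ∃ z cs, T.nodeAt q = some (.var z cs) ∧
        k = arityAt T [] + 1 + (freeListCT T).idxOf z)

def extPB (T : CT) : Nat → Pos → Bool
  | 0, _ => false
  | fuel + 1, p =>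
      if p = [] then true
      else
        match enablerF T p with
        | none => false
        | some (q, _) => extPB T fuel q

/-- External nodes: hereditarily enabled by the root. -/
def ENode.extIn (T : CT) : ENode → Bool
  | .s p => extPB T (p.length + 1) p
  | .g e _ => e.extIn T

/-! ## Justified sequences of nodes

A justified sequence is represented as a list of occurrences in **reverse
chronological order** (the head of the list is the last occurrence).  Each
occurrence carries a pointer given by a distance `dist` (`0` = no pointer)
and a label `jlab`, together with a list `pend` of *pending lambdas*. -/

structure Occ where
  node : ENode
  dist : Nat
  jlab : Nat
  pend : List Name
deriving DecidableEq

instance : Inhabited Occ := ⟨⟨.s [], 0, 0, []⟩⟩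

/-- The occurrence of the root of the tree. -/
def rootOcc : Occ := ⟨.s [], 0, 0, []⟩

/-- Indices (into the reversed sequence) of the occurrences retained by the
P-view. -/
def pviewIdx (T : CT) : List Occ → List Nat
  | [] => []
  | o :: s =>
      if o.node.kindIn T = some .lam then
        if o.dist = 0 then [0]
        else 0 :: o.dist :: ((pviewIdx T (s.drop o.dist)).map (fun i => i + o.dist + 1))
      else 0 :: (pviewIdx T s).map (fun i => i + 1)
termination_by s => s.length
decreasing_by
  all_goals simp [List.length_drop]
  all_goals omega

/-- Indices of the occurrences retained by the O-view. -/
def oviewIdx (T : CT) : List Occ → List Nat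
  | [] => []
  | o :: s =>
      if o.node.kindIn T = some .lam then 0 :: (oviewIdx T s).map (fun i => i + 1)
      else
        if o.dist = 0 then [0]
        else 0 :: o.dist :: ((oviewIdx T (s.drop o.dist)).map (fun i => i + o.dist + 1))
termination_by s => s.length
decreasing_by
  all_goals simp [List.length_drop]
  all_goals omega

/-- Extract the subsequence of `s` given by indices (with pending-lambda
data), recomputing justification pointers within the subsequence. -/
def extractK (s : List Occ) (ks : List (Nat × List Name)) (setPend : Bool) :
    List Occ :=
  let idxs := ks.map Prod.fst
  (ks.zipIdx.map Prod.swap).map (fun e =>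
    let a := e.1
    let i := e.2.1
    let o := (s[i]?).getD default
    let d :=
      if o.dist = 0 then 0
      else
        let b := idxs.idxOf (i + o.dist)
        if b < idxs.length ∧ a < b then b - a else 0
    { o with dist := d, pend := if setPend then e.2.2 else o.pend })

/-- The P-view of a justified sequence. -/
def pview (T : CT) (s : List Occ) : List Occ :=
  extractK s ((pviewIdx T s).map (fun i => (i, ([] : List Name)))) false

/-- The O-view of a justified sequence. -/
def oview (T : CT) (s : List Occ) : List Occ :=
  extractK s ((oviewIdx T s).map (fun i => (i, ([] : List Name)))) false

/-- Follow justification pointers from index `i`; returns the index of the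
final pointer-less occurrence. -/
def chainEnd (s : List Occ) : Nat → Nat → Option Nat
  | 0, _ => none
  | fuel + 1, i =>
      match s[i]? with
      | none => none
      | some o => if o.dist = 0 then some i else chainEnd s fuel (i + o.dist)

def herEnd (s : List Occ) (i : Nat) : Option Nat := chainEnd s s.length i

/-- The occurrence at index `i` is hereditarily justified by the root. -/
def HerRoot (s : List Occ) (i : Nat) : Prop :=
  ∃ j o, herEnd s i = some j ∧ s[j]? = some o ∧ o.node = ENode.s []

/-- The occurrence at index `i` is hereditarily justified by an @-node. -/
def HerApp (T : CT) (s : List Occ) (i : Nat) : Prop :=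
  ∃ j o, herEnd s i = some j ∧ s[j]? = some o ∧ o.node.kindIn T = some .app

/-! ## Arity threshold -/

/-- Auxiliary computation of the arity threshold along the last strand. -/
def athZ (T : CT) : List Occ → Int → Int
  | nq :: aq :: rest, acc =>
      if aq.node.extIn T then 0
      else
        max ((nq.node.arityIn T : Int) + acc)
            (athZ T rest (acc + (nq.node.arityIn T : Int) - (aq.node.arityIn T : Int)))
  | _, _ => 0

/-- The arity threshold of a traversal ending with an external variable. -/
def ath (T : CT) (s : List Occ) : Nat := (athZ T s 0).toNat

/-! ## Imaginary traversals (Table 1) and their restrictions -/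

/-- Configuration selecting the variants of the traversal rules. -/
structure TravCfg where
  branch : Bool   -- rule IVar restricted to justifier = last occurrence
  bound : Bool    -- rule IVar label bounded by the arity threshold
  etaVar : Bool   -- eta-expanded subcase of rule Var allowed
  etaIVar : Bool  -- eta-expanded subcase of rule IVar allowed
  ghostLam : Bool -- rule Lam^ghost allowed

/-- The traversal rules (Table 1 of the paper, and its restrictions). -/
inductive TravR (T : CT) (cfg : TravCfg) : List Occ → Prop where
  | root : TravR T cfg [rootOcc]
  | app {s : List Occ} {o : Occ} {p : Pos} :
      TravR T cfg (o :: s) →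
      o.node = .s p → kindAt T p = some .app →
      TravR T cfg (⟨.s (p ++ [0]), 1, 0, []⟩ :: o :: s)
  | lamApp {s : List Occ} {o : Occ} {p : Pos} :
      TravR T cfg (o :: s) →
      o.node = .s p → kindAt T p = some .lam →
      kindAt T (p ++ [1]) = some .app →
      TravR T cfg (⟨.s (p ++ [1]), 0, 0, []⟩ :: o :: s)
  | lamVar {s : List Occ} {o j : Occ} {p bp : Pos} {d k : Nat} :
      TravR T cfg (o :: s) →
      o.node = .s p → kindAt T p = some .lam →
      kindAt T (p ++ [1]) = some .var →
      1 ≤ d → (o :: s)[d - 1]? = some j → j.node = .s bp →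
      EnablesS T bp k (p ++ [1]) →
      (d - 1) ∈ pviewIdx T (o :: s) →
      TravR T cfg (⟨.s (p ++ [1]), d, k, []⟩ :: o :: s)
  | lamGhost {s : List Occ} {gl n a : Occ} :
      cfg.ghostLam = true →
      TravR T cfg (gl :: s) →
      gl.node.isGhost = true → gl.node.kindIn T = some .lam →
      1 ≤ gl.dist → s[gl.dist - 1]? = some n → s[gl.dist]? = some a →
      n.node.kindIn T = some .var → a.node.kindIn T = some .lam →
      TravR T cfg
        (⟨.g a.node (a.node.arityIn T + gl.jlab - n.node.arityIn T),
          gl.dist + 2, a.node.arityIn T + gl.jlab - n.node.arityIn T, []⟩ :: gl :: s)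
  | varC {s : List Occ} {n a m : Occ} {q : Pos} :
      TravR T cfg (n :: s) →
      n.node.kindIn T = some .var →
      HerApp T (n :: s) 0 →
      1 ≤ n.dist → 1 ≤ n.jlab →
      s[n.dist - 1]? = some a → a.node.kindIn T = some .lam →
      s[n.dist]? = some m →
      (m.node.kindIn T = some .var ∨ m.node.kindIn T = some .app) →
      m.node = .s q → n.jlab ≤ arityAt T q →
      TravR T cfg (⟨.s (q ++ [n.jlab]), n.dist + 2, n.jlab, []⟩ :: n :: s)
  | varE {s : List Occ} {n a m : Occ} :
      cfg.etaVar = true →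
      TravR T cfg (n :: s) →
      n.node.kindIn T = some .var →
      HerApp T (n :: s) 0 →
      1 ≤ n.dist → 1 ≤ n.jlab →
      s[n.dist - 1]? = some a → a.node.kindIn T = some .lam →
      s[n.dist]? = some m →
      (m.node.kindIn T = some .var ∨ m.node.kindIn T = some .app) →
      m.node.arityIn T < n.jlab →
      TravR T cfg (⟨.g m.node n.jlab, n.dist + 2, n.jlab, []⟩ :: n :: s)
  | ivarC {s : List Occ} {n m : Occ} {q : Pos} {jm i : Nat} :
      TravR T cfg (n :: s) →
      n.node.kindIn T = some .var →
      (cfg.branch = true → n.node.extIn T = true) →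
      (cfg.branch = false → HerRoot (n :: s) 0) →
      1 ≤ i →
      (n :: s)[jm]? = some m → m.node.kindIn T = some .var →
      jm ∈ oviewIdx T (n :: s) →
      (cfg.branch = true → jm = 0) →
      (cfg.bound = true → i ≤ ath T (n :: s)) →
      m.node = .s q → i ≤ arityAt T q →
      TravR T cfg (⟨.s (q ++ [i]), jm + 1, i, []⟩ :: n :: s)
  | ivarE {s : List Occ} {n m : Occ} {jm i : Nat} :
      cfg.etaIVar = true →
      TravR T cfg (n :: s) →
      n.node.kindIn T = some .var →
      (cfg.branch = true → n.node.extIn T = true) →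
      (cfg.branch = false → HerRoot (n :: s) 0) →
      1 ≤ i →
      (n :: s)[jm]? = some m → m.node.kindIn T = some .var →
      jm ∈ oviewIdx T (n :: s) →
      (cfg.branch = true → jm = 0) →
      (cfg.bound = true → i ≤ ath T (n :: s)) →
      m.node.arityIn T < i →
      TravR T cfg (⟨.g m.node i, jm + 1, i, []⟩ :: n :: s)

/-- Imaginary traversals of the untyped λ-calculus (Table 1). -/
def Trav (T : CT) : List Occ → Prop :=
  TravR T ⟨false, false, true, true, true⟩

/-- Branching traversals: rule IVar points to the last occurrence. -/
def TravB (T : CT) : List Occ → Prop :=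
  TravR T ⟨true, false, true, true, true⟩

/-- Normalizing traversals (Table 2): branching + arity-threshold bound. -/
def TravN (T : CT) : List Occ → Prop :=
  TravR T ⟨true, true, true, true, true⟩

/-- STLC traversals: no ghost rules at all. -/
def TravSTLC (T : CT) : List Occ → Prop :=
  TravR T ⟨false, false, false, false, false⟩

/-- Traversals without the eta-expanded subcase of rule IVar. -/
def TravNoEtaIVar (T : CT) : List Occ → Prop :=
  TravR T ⟨false, false, true, false, true⟩

/-- Chronological prefix of length `n` of an infinite sequence of
occurrences, in reverse representation. -/
def prefixRev (f : Nat → Occ) (n : Nat) : List Occ :=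
  ((List.range n).map f).reverse
/-! ## Justified paths of the computation tree -/

/-- Justified paths: paths of the computation tree from the root, equipped
with the induced justification pointers (bound variables point to their
binder with the binding index, free variables to the root, λ-nodes to their
parent with the child index). -/
inductive JPath (T : CT) : List Occ → Prop where
  | root : JPath T [rootOcc]
  | lam {s : List Occ} {o : Occ} {p : Pos} {k : Nat} :
      JPath T (o :: s) → o.node = .s p →
      (kindAt T p = some .var ∨ kindAt T p = some .app) →
      (T.nodeAt (p ++ [k])).isSome = true → kindAt T (p ++ [k]) = some .lam →
      JPath T (⟨.s (p ++ [k]), 1, k, []⟩ :: o :: s)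
  | appNode {s : List Occ} {o : Occ} {p : Pos} :
      JPath T (o :: s) → o.node = .s p → kindAt T p = some .lam →
      kindAt T (p ++ [1]) = some .app →
      JPath T (⟨.s (p ++ [1]), 0, 0, []⟩ :: o :: s)
  | varNode {s : List Occ} {o j : Occ} {p bp : Pos} {d k : Nat} :
      JPath T (o :: s) → o.node = .s p → kindAt T p = some .lam →
      kindAt T (p ++ [1]) = some .var →
      1 ≤ d → (o :: s)[d - 1]? = some j → j.node = .s bp →
      EnablesS T bp k (p ++ [1]) →
      JPath T (⟨.s (p ++ [1]), d, k, []⟩ :: o :: s)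

/-- Maximal justified paths. -/
def MaxJPath (T : CT) (s : List Occ) : Prop :=
  JPath T s ∧ ∀ o, ¬ JPath T (o :: s)

/-- Label of an occurrence (structural nodes only). -/
def labOf (T : CT) (o : Occ) : Option NLabel :=
  match o.node with
  | .s p => (T.nodeAt p).map CT.labelOf
  | .g _ _ => none

/-! ## Structures of justified sequences -/

/-- The structure of an occurrence: node kind, pointer distance, pointer
label (node labels are forgotten). -/
structure OccStr where
  kind : Option NKind
  dist : Nat
  jlab : Nat
deriving DecidableEq

/-- The structure of a justified sequence. -/
def strOf (T : CT) (s : List Occ) : List OccStr :=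
  s.map (fun o => ⟨o.node.kindIn T, o.dist, o.jlab⟩)

/-! ## Core projection -/

/-- Indices (with pending-lambda relabelling data) retained by the core
projection, computed with a stack `ys` of pending lambdas. -/
def coreIdx (T : CT) : List Occ → List Name → List (Nat × List Name)
  | [], _ => []
  | o :: s, ys =>
      match o.node.kindIn T with
      | some .var =>
          if o.node.extIn T then
            (0, o.pend) :: (coreIdx T s []).map (fun e => (e.1 + 1, e.2))
          else (coreIdx T s (ys.drop (o.node.arityIn T))).map (fun e => (e.1 + 1, e.2))
      | some .app =>
          (coreIdx T s (ys.drop (o.node.arityIn T))).map (fun e => (e.1 + 1, e.2))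
      | some .lam =>
          if o.node.extIn T then
            (0, o.pend ++ ys) :: (coreIdx T s []).map (fun e => (e.1 + 1, e.2))
          else
            match o.node with
            | .s p =>
                (coreIdx T s (boundAt T p ++ o.pend ++ ys)).map (fun e => (e.1 + 1, e.2))
            | .g _ _ => (coreIdx T s (o.pend ++ ys)).map (fun e => (e.1 + 1, e.2))
      | none => (coreIdx T s ys).map (fun e => (e.1 + 1, e.2))

/-- The core of a justified sequence: the subsequence of external occurrences,
with pending lambdas prepended to the labels of external λ-nodes. -/
def core (T : CT) (s : List Occ) : List Occ :=
  extractK s (coreIdx T s []) true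

/-! ## On-the-fly eta-expansion -/

def modArg : List CT → Nat → (CT → CT) → List CT
  | [], _, _ => []
  | c :: cs, 0, f => f c :: cs
  | c :: cs, k + 1, f => c :: modArg cs k f

def CT.modifyAt : CT → Pos → (CT → CT) → CT
  | t, [], f => f t
  | .lam xs c, 1 :: p, f => .lam xs (c.modifyAt p f)
  | .var z cs, (k + 1) :: p, f => .var z (modArg cs k (fun c => c.modifyAt p f))
  | .app op cs, 0 :: p, f => .app (op.modifyAt p f) cs
  | .app op cs, (k + 1) :: p, f => .app op (modArg cs k (fun c => c.modifyAt p f))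
  | t, _, _ => t
termination_by t p _ => p.length
decreasing_by all_goals simp

def freshCT (T : CT) : Name := (namesCT T).foldr max 0 + 1

/-- One eta-expansion step at the variable/@-node `q`: the subterm `N`
rooted at `q` is replaced by `λθ. N θ` for a fresh `θ` (in the computation
tree, `θ` is appended to the bound variables of the parent λ-node and a new
operand `λ⟨θ⟩` is appended to the children of `q`). -/
def etaStep (T : CT) (q : Pos) : CT :=
  let θ := freshCT T
  let T1 := T.modifyAt q (fun n =>
    match n with
    | .var z cs => .var z (cs ++ [.lam [] (.var θ [])])
    | .app op cs => .app op (cs ++ [.lam [] (.var θ [])])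
    | t => t)
  T1.modifyAt q.dropLast (fun n =>
    match n with
    | .lam xs c => .lam (xs ++ [θ]) c
    | t => t)

/-- Process the occurrences of a traversal chronologically, performing an
eta-expansion at the justifier of each ghost λ-node occurrence (the
eta-expanded subcases of rules Var and IVar); `acc` records the materialized
position of each processed occurrence. -/
def etaFoldGo : CT → List Pos → List Occ → CT
  | T, _, [] => T
  | T, acc, o :: os =>
      match o.node with
      | .s p => etaFoldGo T (p :: acc) os
      | .g _ i =>
          if o.node.kindIn T = some .lam then
            let q := acc.getD (o.dist - 1) []
            etaFoldGo (etaStep T q) ((q ++ [i]) :: acc) os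
          else
            let q := acc.getD 0 []
            etaFoldGo T ((q ++ [1]) :: acc) os

/-- The on-the-fly eta-expansion `M^t` of (the computation tree of) a term
with respect to a finite traversal `t`. -/
def etaExpCT (T : CT) (t : List Occ) : CT := etaFoldGo T [] t.reverse

/-- Element-wise, pointer-preserving extension of a map on extended nodes to
justified sequences. -/
def mapOcc (η : ENode → ENode) (s : List Occ) : List Occ :=
  s.map (fun o => { o with node := η o.node })

/-! ## Isomorphisms of sets of justified sequences -/

/-- Structure-preserving bijection between two sets of justified sequences
(over trees `T₁` and `T₂` respectively). -/
def StrIso (T₁ T₂ : CT) (S₁ S₂ : Set (List Occ)) : Prop :=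
  ∃ φ : List Occ → List Occ, Set.BijOn φ S₁ S₂ ∧
    ∀ s ∈ S₁, strOf T₂ (φ s) = strOf T₁ s

/-- The set of cores of normalizing traversals of a term. -/
def CoreSet (M : Term) : Set (List Occ) :=
  {c | ∃ t, TravN (ctree M) t ∧ c = core (ctree M) t}

/-- The set of structures of core P-views of normalizing traversals
(the quotient `Trav^n(M)/∼`, each class identified with the common structure
of the core P-views of its members). -/
def QuotSet (M : Term) : Set (List OccStr) :=
  {x | ∃ t, TravN (ctree M) t ∧
        x = strOf (ctree M) (pview (ctree M) (core (ctree M) t))}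
/-! ## Strands (for the weaving proposition) -/

/-- `n_q` of the last strand: the (var/@)-occurrence at index `2(q-1)` of the
reversed sequence (`q` counted from 1, so `n_1` is the last occurrence). -/
def nOcc (t : List Occ) (q : Nat) : Occ := (t[2 * (q - 1)]?).getD default

/-- `α_q` of the last strand: the λ-occurrence at index `2q - 1`. -/
def aOcc (t : List Occ) (q : Nat) : Occ := (t[2 * q - 1]?).getD default

def nAr (T : CT) (t : List Occ) (q : Nat) : Int := ((nOcc t q).node.arityIn T : Int)
def aAr (T : CT) (t : List Occ) (q : Nat) : Int := ((aOcc t q).node.arityIn T : Int)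

/-- `i_q = i - ∑_{j=1}^{q-1} (|n_j| - |α_j|)`. -/
def iSeq (T : CT) (t : List Occ) (i : Nat) (q : Nat) : Int :=
  (i : Int) - ∑ j ∈ Finset.Ico 1 q, (nAr T t j - aAr T t j)

/-- The last strand of `t` has length `2k`: it starts with an external
λ-node `α_k`, ends with the last occurrence `n_1`, an external variable,
and all the `2k - 2` occurrences in between are internal, alternating
between λ-nodes and variable/@-nodes. -/
def LastStrand (T : CT) (t : List Occ) (k : Nat) : Prop :=
  1 ≤ k ∧ 2 * k ≤ t.length ∧
  (∀ q, 1 ≤ q → q ≤ k →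
    ((nOcc t q).node.kindIn T = some .var ∨ (nOcc t q).node.kindIn T = some .app)) ∧
  (∀ q, 1 ≤ q → q ≤ k → (aOcc t q).node.kindIn T = some .lam) ∧
  (nOcc t 1).node.kindIn T = some .var ∧ (nOcc t 1).node.extIn T = true ∧
  (aOcc t k).node.extIn T = true ∧
  (∀ j, 1 ≤ j → j ≤ 2 * k - 2 → ∀ o, t[j]? = some o → o.node.extIn T = false)

/-! ## Spinal paths (for the generalized redex argument lookup) -/

/-- Position of `@_j` on the spinal descent below the @-node at `a`
(`@_r = a` is the topmost one, `@_1` the lowest). -/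
def atPos (a : Pos) (r j : Nat) : Pos :=
  a ++ (List.replicate (r - j) ([0, 1] : Pos)).flatten

/-- The sequence `i_1 = i`, `i_{j+1} = i_j - |@_j| + |λx̄_{j+1}|` along the
spinal descent. -/
def iSeqL (T : CT) (a : Pos) (r i : Nat) : Nat → Int
  | 0 => (i : Int)
  | 1 => (i : Int)
  | j + 1 =>
      iSeqL T a r i j - (arityAt T (atPos a r j) : Int)
        + (arityAt T (atPos a r (j + 1) ++ [0]) : Int)
end ULC


set_option maxHeartbeats 1000000

namespace ULCX
open ULC

/-! ### Argument lists of simple types -/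

def tyArgs : Ty → List Ty
  | .base => []
  | .arrow A B => A :: tyArgs B

abbrev Env := List (Name × Ty)

/-! ### Type-valued eta-long typing derivations for computation trees -/

mutual
inductive WLd : Env → CT → Ty → Type where
  | mk : ∀ {Δ : Env} {xs : List Name} {c : CT} {A B : Ty},
      xs.length = (tyArgs A).length →
      WSd ((xs.zip (tyArgs A)).reverse ++ Δ) c B → WLd Δ (.lam xs c) A
inductive WSd : Env → CT → Ty → Type where
  | var : ∀ {Δ : Env} {z : Name} {cs : List CT} {A : Ty},
      Δ.lookup z = some A → WLsd Δ cs (tyArgs A) → WSd Δ (.var z cs) A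
  | app : ∀ {Δ : Env} {xs : List Name} {c : CT} {cs : List CT} {A : Ty},
      WLd Δ (.lam xs c) A → WLsd Δ cs (tyArgs A) → WSd Δ (.app (.lam xs c) cs) A
inductive WLsd : Env → List CT → List Ty → Type where
  | nil : ∀ {Δ : Env}, WLsd Δ [] []
  | cons : ∀ {Δ : Env} {c : CT} {A : Ty} {cs : List CT} {As : List Ty},
      WLd Δ c A → WLsd Δ cs As → WLsd Δ (c :: cs) (A :: As)
end

def WLsd.get : {Δ : Env} → {cs : List CT} → {As : List Ty} →
    WLsd Δ cs As → Nat → Option ((c : CT) ×' (A : Ty) ×' WLd Δ c A)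
  | _, _, _, .nil, _ => none
  | _, _, _, .cons d _, 0 => some ⟨_, _, d⟩
  | _, _, _, .cons _ ds, k+1 => ds.get k

theorem WLsd.length_eq : ∀ {Δ cs As}, WLsd Δ cs As → cs.length = As.length
  | _, _, _, .nil => rfl
  | _, _, _, .cons _ ds => by simp [ds.length_eq]

theorem WLsd.get_spec : ∀ {Δ cs As} (d : WLsd Δ cs As) (k : Nat) x,
    d.get k = some x → cs[k]? = some x.1 ∧ As[k]? = some x.2.1
  | _, _, _, .nil, k, x, h => by simp [WLsd.get] at h
  | _, _, _, .cons d ds, 0, x, h => by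
      cases h; constructor <;> simp
  | _, _, _, .cons d ds, k+1, x, h => by
      simpa using ds.get_spec k x h

theorem WLsd.get_isSome : ∀ {Δ cs As} (d : WLsd Δ cs As) (k : Nat),
    k < cs.length → ∃ x, d.get k = some x
  | _, _, _, .nil, k, h => by simp at h
  | _, _, _, .cons d ds, 0, _ => ⟨_, rfl⟩
  | _, _, _, .cons d ds, k+1, h => by
      simpa [WLsd.get] using ds.get_isSome k (by simpa using h)

def WLsd.snoc : {Δ : Env} → {cs : List CT} → {As : List Ty} → {c : CT} → {A : Ty} →
    WLsd Δ cs As → WLd Δ c A → WLsd Δ (cs ++ [c]) (As ++ [A])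
  | _, _, _, _, _, .nil, d => .cons d .nil
  | _, _, _, _, _, .cons e es, d => .cons e (es.snoc d)

/-! ### Navigation in a typed tree -/

inductive Info : Type where
  | lamI : (Δ : Env) → (t : CT) → (A : Ty) → WLd Δ t A → Info
  | spI  : (Δ : Env) → (t : CT) → (A : Ty) → WSd Δ t A → Info

def Info.tree : Info → CT
  | .lamI _ t _ _ => t
  | .spI _ t _ _ => t

def Info.env : Info → Env
  | .lamI Δ _ _ _ => Δ
  | .spI Δ _ _ _ => Δ

def goStep : Info → Nat → Option Info
  | .lamI Δ _ A d, k =>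
      match k, d with
      | 1, .mk (xs := xs) (c := c) _ ws =>
          some (.spI ((xs.zip (tyArgs A)).reverse ++ Δ) c _ ws)
      | _, _ => none
  | .spI Δ _ A d, k =>
      match k, d with
      | 0, .app (xs := xs) (c := c) dop _ => some (.lamI Δ (.lam xs c) A dop)
      | 0, .var _ _ => none
      | k+1, .var _ dargs => (dargs.get k).map (fun x => .lamI Δ x.1 x.2.1 x.2.2)
      | k+1, .app _ dargs => (dargs.get k).map (fun x => .lamI Δ x.1 x.2.1 x.2.2)

def tau {Γ₀ : Env} {T : CT} {A₀ : Ty} (D : WLd Γ₀ T A₀) (p : Pos) : Option Info :=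
  p.foldl (fun oi k => oi.bind (fun i => goStep i k)) (some (.lamI Γ₀ T A₀ D))

section Tau

variable {Γ₀ : Env} {T : CT} {A₀ : Ty} (D : WLd Γ₀ T A₀)

theorem tau_nil : tau D [] = some (.lamI Γ₀ T A₀ D) := rfl

theorem tau_append (p : Pos) (k : Nat) :
    tau D (p ++ [k]) = (tau D p).bind (fun i => goStep i k) := by
  simp [tau, List.foldl_append]

end Tau

/-! ### nodeAt along concatenated paths -/

theorem nodeAt_append : ∀ (p : Pos) (t : CT) (q : Pos),
    t.nodeAt (p ++ q) = (t.nodeAt p).bind (fun u => u.nodeAt q)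
  | [], t, q => by simp [CT.nodeAt]
  | k :: p, t, q => by
    match t, k with
    | .lam xs c, 0 => simp [CT.nodeAt]
    | .lam xs c, 1 => simpa [CT.nodeAt] using nodeAt_append p c q
    | .lam xs c, (n+2) => simp [CT.nodeAt]
    | .var z cs, 0 => simp [CT.nodeAt]
    | .var z cs, (n+1) =>
        cases h : cs[n]? with
        | none => simp [CT.nodeAt, h]
        | some c => simpa [CT.nodeAt, h] using nodeAt_append p c q
    | .app op cs, 0 => simpa [CT.nodeAt] using nodeAt_append p op q
    | .app op cs, (n+1) =>
        cases h : cs[n]? with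
        | none => simp [CT.nodeAt, h]
        | some c => simpa [CT.nodeAt, h] using nodeAt_append p c q

section Tau2

variable {Γ₀ : Env} {T : CT} {A₀ : Ty} (D : WLd Γ₀ T A₀)

theorem goStep_node : ∀ (i : Info) (k : Nat) (i' : Info),
    goStep i k = some i' → i.tree.nodeAt [k] = some i'.tree := by
  intro i k i' h
  match i with
  | .lamI Δ t A d =>
    match k, d with
    | 1, .mk hlen ws =>
        simp [goStep] at h; subst h; simp [CT.nodeAt, Info.tree]
    | 0, .mk hlen ws => simp [goStep] at h
    | (n+2), .mk hlen ws => simp [goStep] at h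
  | .spI Δ t A d =>
    match k, d with
    | 0, .app dop dargs =>
        simp [goStep] at h; subst h; simp [CT.nodeAt, Info.tree]
    | 0, .var _ _ => simp [goStep] at h
    | k+1, .var hz dargs =>
        have h' : (dargs.get k).map (fun x => Info.lamI _ x.1 x.2.1 x.2.2) = some i' := h
        obtain ⟨x, hx, hi⟩ := Option.map_eq_some_iff.mp h'
        subst hi
        simp [CT.nodeAt, Info.tree, (WLsd.get_spec dargs k x hx).1]
    | k+1, .app dop dargs =>
        have h' : (dargs.get k).map (fun x => Info.lamI _ x.1 x.2.1 x.2.2) = some i' := h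
        obtain ⟨x, hx, hi⟩ := Option.map_eq_some_iff.mp h'
        subst hi
        simp [CT.nodeAt, Info.tree, (WLsd.get_spec dargs k x hx).1]

theorem tau_node : ∀ (p : Pos) (i : Info), tau D p = some i → T.nodeAt p = some i.tree := by
  intro p
  induction p using List.reverseRecOn with
  | nil => intro i h; rw [tau_nil] at h; cases h; simp [CT.nodeAt, Info.tree]
  | append_singleton p k ih =>
    intro i h
    rw [tau_append] at h
    obtain ⟨i₀, h₀, hstep⟩ := Option.bind_eq_some_iff.mp h
    rw [nodeAt_append, ih i₀ h₀]
    simpa using goStep_node i₀ k i hstep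

end Tau2

/-! ### Shape facts -/

theorem lam_shape {Δ t A} (d : WLd Δ t A) :
    ∃ xs c, t = CT.lam xs c ∧ xs.length = (tyArgs A).length := by
  cases d with | mk h _ => exact ⟨_, _, rfl, h⟩

theorem sp_shape {Δ t A} (d : WSd Δ t A) :
    (∃ z cs, t = CT.var z cs ∧ Δ.lookup z = some A ∧ cs.length = (tyArgs A).length) ∨
    (∃ xs c cs, t = CT.app (.lam xs c) cs ∧ cs.length = (tyArgs A).length) := by
  cases d with
  | var hz dargs => exact Or.inl ⟨_, _, rfl, hz, dargs.length_eq⟩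
  | app dop dargs => exact Or.inr ⟨_, _, _, rfl, dargs.length_eq⟩

theorem sp_arity {Δ t A} (d : WSd Δ t A) : t.arity = (tyArgs A).length := by
  rcases sp_shape d with ⟨z, cs, rfl, _, h⟩ | ⟨xs, c, cs, rfl, h⟩ <;> simpa [CT.arity]

theorem sp_kind {Δ t A} (d : WSd Δ t A) : t.kind = NKind.var ∨ t.kind = NKind.app := by
  rcases sp_shape d with ⟨z, cs, rfl, _, _⟩ | ⟨xs, c, cs, rfl, _⟩ <;> simp [CT.kind]

section Tau3

variable {Γ₀ : Env} {T : CT} {A₀ : Ty} (D : WLd Γ₀ T A₀)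

theorem tau_step_body {p Δ t A d} (h : tau D p = some (.lamI Δ t A d)) :
    ∃ xs c B ws, t = CT.lam xs c ∧
      tau D (p ++ [1]) = some (.spI ((xs.zip (tyArgs A)).reverse ++ Δ) c B ws) := by
  cases d with
  | mk hlen ws =>
    refine ⟨_, _, _, ws, rfl, ?_⟩
    rw [tau_append, h]
    rfl

theorem tau_step_op {p Δ op cs A d} (h : tau D p = some (.spI Δ (.app op cs) A d)) :
    ∃ d', tau D (p ++ [0]) = some (.lamI Δ op A d') := by
  cases d with
  | app dop dargs =>
    refine ⟨dop, ?_⟩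
    rw [tau_append, h]
    rfl

theorem tau_step_arg {p Δ t A d} (k : Nat) (hk : 1 ≤ k)
    (h : tau D p = some (.spI Δ t A d)) (hle : k ≤ (tyArgs A).length) :
    ∃ c B d', (tyArgs A)[k-1]? = some B ∧
      tau D (p ++ [k]) = some (.lamI Δ c B d') := by
  obtain ⟨k', rfl⟩ : ∃ k', k = k' + 1 := ⟨k - 1, by omega⟩
  cases d with
  | var hz dargs =>
    have hlen := dargs.length_eq
    obtain ⟨x, hx⟩ := dargs.get_isSome k' (by omega)
    have hs := dargs.get_spec k' x hx
    refine ⟨x.1, x.2.1, x.2.2, by simpa using hs.2, ?_⟩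
    rw [tau_append, h]
    simp [goStep, hx]
  | app dop dargs =>
    have hlen := dargs.length_eq
    obtain ⟨x, hx⟩ := dargs.get_isSome k' (by omega)
    have hs := dargs.get_spec k' x hx
    refine ⟨x.1, x.2.1, x.2.2, by simpa using hs.2, ?_⟩
    rw [tau_append, h]
    simp [goStep, hx]

end Tau3

theorem tau_root_lam {Γ₀ : Env} {T : CT} {A₀ : Ty} (D : WLd Γ₀ T A₀) :
    ∃ xs c, T = CT.lam xs c := by
  obtain ⟨xs, c, h, _⟩ := lam_shape D
  exact ⟨xs, c, h⟩

end ULCX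


set_option maxHeartbeats 1000000

namespace ULCX
open ULC

/-! ### Computation trees of eta-long terms are well-typed -/

theorem ctreeL_shape (M : Term) : ∃ xs c, ctreeL M = CT.lam xs c := by
  cases M with
  | var z => exact ⟨[], .var z [], by rw [ctreeL]⟩
  | app u v => exact ⟨[], ctreeB (.app u v), by rw [ctreeL]⟩
  | lam x u =>
      cases h : ctreeL u with
      | lam xs c => exact ⟨x :: xs, c, by rw [ctreeL, h]⟩
      | var z cs => exact ⟨[x], _, by rw [ctreeL, h]⟩
      | app op cs => exact ⟨[x], _, by rw [ctreeL, h]⟩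

theorem ctreeB_lam (x : Name) (u : Term) :
    ctreeB (.lam x u) = CT.app (ctreeL (.lam x u)) [] := by
  rw [ctreeB, ctreeL]

theorem build_lam {x : Name} {U : Term} {A₁ B : Ty} {Γ : Env}
    (h : Nonempty (WLd ((x, A₁) :: Γ) (ctreeL U) B)) :
    Nonempty (WLd Γ (ctreeL (.lam x U)) (.arrow A₁ B)) := by
  obtain ⟨d⟩ := h
  obtain ⟨xs, c, hx⟩ := ctreeL_shape U
  rw [hx] at d
  cases d with
  | @mk _ _ _ _ B' hlen ws =>
    refine ⟨?_⟩
    rw [ctreeL, hx]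
    have henv : ((x :: xs).zip (tyArgs (.arrow A₁ B))).reverse ++ Γ
        = (xs.zip (tyArgs B)).reverse ++ ((x, A₁) :: Γ) := by
      show ((x :: xs).zip (A₁ :: tyArgs B)).reverse ++ Γ = _
      simp
    refine WLd.mk (A := .arrow A₁ B) (B := B') (by simp [tyArgs, hlen]) ?_
    rw [henv]
    exact ws

def SpineOK (Γ : Env) (M : Term) (A : Ty) : Prop :=
  (∃ z cs pre A₀, ctreeB M = CT.var z cs ∧ Γ.lookup z = some A₀ ∧
     tyArgs A₀ = pre ++ tyArgs A ∧ Nonempty (WLsd Γ cs pre)) ∨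
  (∃ xs c cs pre A₀, ctreeB M = CT.app (.lam xs c) cs ∧
     Nonempty (WLd Γ (.lam xs c) A₀) ∧ tyArgs A₀ = pre ++ tyArgs A ∧
     Nonempty (WLsd Γ cs pre))

theorem elong_wt : ∀ M : Term,
    (∀ Γ A, ELong Γ M A → Nonempty (WLd Γ (ctreeL M) A)) ∧
    (∀ Γ A, ESpine Γ M A → SpineOK Γ M A) := by
  intro M
  induction M with
  | var z =>
    constructor
    · intro Γ A h
      cases h with
      | base hs =>
        cases hs with
        | var hz =>
          refine ⟨?_⟩
          rw [ctreeL]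
          exact WLd.mk (A := .base) (B := .base) (by simp [tyArgs])
            (WSd.var (A := .base) (by simpa using hz) WLsd.nil)
    · intro Γ A h
      cases h with
      | var hz =>
        exact Or.inl ⟨z, [], [], A, by rw [ctreeB], hz, by simp, ⟨WLsd.nil⟩⟩
  | lam x u ih =>
    have hL : ∀ Γ A, ELong Γ (.lam x u) A → Nonempty (WLd Γ (ctreeL (.lam x u)) A) := by
      intro Γ A h
      cases h with
      | arrow hU => exact build_lam (ih.1 _ _ hU)
      | base hs => cases hs
    refine ⟨hL, ?_⟩
    intro Γ A h
    cases h with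
    | head hE =>
      obtain ⟨d⟩ := hL _ _ hE
      obtain ⟨xs, c, hx⟩ := ctreeL_shape (.lam x u)
      rw [hx] at d
      refine Or.inr ⟨xs, c, [], [], _, ?_, ⟨d⟩, by simp, ⟨WLsd.nil⟩⟩
      rw [ctreeB_lam, hx]
  | app u v ihu ihv =>
    have hS : ∀ Γ A, ESpine Γ (.app u v) A → SpineOK Γ (.app u v) A := by
      intro Γ B h
      cases h with
      | app hU hV =>
        rename_i A
        obtain ⟨dv⟩ := ihv.1 _ _ hV
        rcases ihu.2 _ _ hU with
          ⟨z, cs, pre, A₀, hB, hz, hty, ⟨dargs⟩⟩ |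
          ⟨xs, c, cs, pre, A₀, hB, hop, hty, ⟨dargs⟩⟩
        · refine Or.inl ⟨z, cs ++ [ctreeL v], pre ++ [A], A₀, ?_, hz, ?_, ⟨dargs.snoc dv⟩⟩
          · rw [ctreeB, hB]
          · rw [hty]; simp [tyArgs]
        · refine Or.inr ⟨xs, c, cs ++ [ctreeL v], pre ++ [A], A₀, ?_, hop, ?_, ⟨dargs.snoc dv⟩⟩
          · rw [ctreeB, hB]
          · rw [hty]; simp [tyArgs]
    refine ⟨?_, hS⟩
    intro Γ A h
    cases h with
    | base hs =>
      rcases hS _ _ hs with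
        ⟨z, cs, pre, A₀, hB, hz, hty, ⟨dargs⟩⟩ |
        ⟨xs, c, cs, pre, A₀, hB, ⟨dop⟩, hty, ⟨dargs⟩⟩
      · refine ⟨?_⟩
        rw [ctreeL, hB]
        have hpre : tyArgs A₀ = pre := by simpa [tyArgs] using hty
        refine WLd.mk (A := .base) (by simp [tyArgs]) (WSd.var (A := A₀) hz ?_)
        rw [hpre]; exact dargs
      · refine ⟨?_⟩
        rw [ctreeL, hB]
        have hpre : tyArgs A₀ = pre := by simpa [tyArgs] using hty
        refine WLd.mk (A := .base) (by simp [tyArgs]) (WSd.app (A := A₀) dop ?_)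
        rw [hpre]; exact dargs

/-! ### Pointer chains -/

theorem chainEnd_zero (s : List Occ) (i : Nat) : chainEnd s 0 i = none := rfl

theorem chainEnd_succ (s : List Occ) (f i : Nat) :
    chainEnd s (f + 1) i = match s[i]? with
      | none => none
      | some o => if o.dist = 0 then some i else chainEnd s f (i + o.dist) := rfl

def HE (s : List Occ) (i j : Nat) : Prop := ∃ f, chainEnd s f i = some j

theorem chainEnd_mono {s : List Occ} :
    ∀ {f f' i j : Nat}, chainEnd s f i = some j → f ≤ f' → chainEnd s f' i = some j := by
  intro f
  induction f with
  | zero => intro f' i j h; rw [chainEnd_zero] at h; exact absurd h (by simp)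
  | succ f ih =>
    intro f' i j h hle
    obtain ⟨f'', rfl⟩ : ∃ f'', f' = f'' + 1 := ⟨f' - 1, by omega⟩
    cases hsi : s[i]? with
    | none =>
      rw [chainEnd_succ, hsi] at h
      change (none : Option Nat) = some j at h
      exact absurd h (by simp)
    | some o =>
      rw [chainEnd_succ, hsi] at h
      rw [chainEnd_succ, hsi]
      change (if o.dist = 0 then some i else chainEnd s f (i + o.dist)) = some j at h
      change (if o.dist = 0 then some i else chainEnd s f'' (i + o.dist)) = some j
      by_cases hd : o.dist = 0
      · simpa [hd] using h
      · rw [if_neg hd] at h ⊢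
        exact ih h (by omega)

theorem chainEnd_min {s : List Occ} :
    ∀ (k i f j : Nat), s.length - i ≤ k → chainEnd s f i = some j →
      chainEnd s (s.length - i) i = some j := by
  intro k
  induction k with
  | zero =>
    intro i f j hk h
    obtain ⟨f', rfl⟩ : ∃ f', f = f' + 1 := by
      cases f with
      | zero => rw [chainEnd_zero] at h; exact absurd h (by simp)
      | succ f => exact ⟨f, rfl⟩
    rw [chainEnd_succ] at h
    have hnone : s[i]? = none := by rw [List.getElem?_eq_none]; omega
    rw [hnone] at h
    change (none : Option Nat) = some j at h
    exact absurd h (by simp)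
  | succ k ih =>
    intro i f j hk h
    obtain ⟨f', rfl⟩ : ∃ f', f = f' + 1 := by
      cases f with
      | zero => rw [chainEnd_zero] at h; exact absurd h (by simp)
      | succ f => exact ⟨f, rfl⟩
    cases hsi : s[i]? with
    | none =>
      rw [chainEnd_succ, hsi] at h
      change (none : Option Nat) = some j at h
      exact absurd h (by simp)
    | some o =>
      rw [chainEnd_succ, hsi] at h
      change (if o.dist = 0 then some i else chainEnd s f' (i + o.dist)) = some j at h
      have hilen : i < s.length := by
        by_contra hc
        rw [List.getElem?_eq_none (by omega)] at hsi
        exact absurd hsi (by simp)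
      have hrw : s.length - i = (s.length - i - 1) + 1 := by omega
      rw [hrw, chainEnd_succ, hsi]
      change (if o.dist = 0 then some i else chainEnd s (s.length - i - 1) (i + o.dist)) = some j
      by_cases hd : o.dist = 0
      · simpa [hd] using h
      · rw [if_neg hd] at h ⊢
        have hmin := ih (i + o.dist) f' j (by omega) h
        exact chainEnd_mono hmin (by omega)

theorem HE_herEnd {s : List Occ} {i j : Nat} : herEnd s i = some j ↔ HE s i j := by
  constructor
  · exact fun h => ⟨_, h⟩
  · rintro ⟨f, hf⟩
    have h1 := chainEnd_min s.length i f j (by omega) hf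
    exact chainEnd_mono h1 (by omega)

theorem chainEnd_append (u v : List Occ) : ∀ (f i : Nat),
    chainEnd (u ++ v) f (u.length + i) = (chainEnd v f i).map (· + u.length) := by
  intro f
  induction f with
  | zero => intro i; rw [chainEnd_zero, chainEnd_zero]; rfl
  | succ f ih =>
    intro i
    rw [chainEnd_succ, chainEnd_succ]
    rw [List.getElem?_append_right (by omega : u.length ≤ u.length + i)]
    rw [show u.length + i - u.length = i by omega]
    cases hv : v[i]? with
    | none => rfl
    | some o =>
      change (if o.dist = 0 then some (u.length + i) else chainEnd (u ++ v) f (u.length + i + o.dist))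
          = (if o.dist = 0 then some i else chainEnd v f (i + o.dist)).map (· + u.length)
      by_cases hd : o.dist = 0
      · simp [hd, Nat.add_comm]
      · rw [if_neg hd, if_neg hd]
        rw [show u.length + i + o.dist = u.length + (i + o.dist) by omega]
        exact ih (i + o.dist)

def EndsWith (P : Occ → Prop) (s : List Occ) : Prop :=
  ∃ j u, herEnd s 0 = some j ∧ s[j]? = some u ∧ P u

theorem herRoot_endsWith {s : List Occ} :
    HerRoot s 0 ↔ EndsWith (fun u => u.node = ENode.s []) s := Iff.rfl

theorem herApp_endsWith {T : CT} {s : List Occ} :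
    HerApp T s 0 ↔ EndsWith (fun u => u.node.kindIn T = some .app) s := Iff.rfl

theorem key_drop {s : List Occ} {d : Nat} (hd : d ≤ s.length) (f i : Nat) :
    chainEnd s f (d + i) = (chainEnd (s.drop d) f i).map (· + d) := by
  conv_lhs => rw [← List.take_append_drop d s]
  have := chainEnd_append (s.take d) (s.drop d) f i
  rwa [List.length_take, Nat.min_eq_left hd] at this

theorem endsWith_drop {P : Occ → Prop} (s : List Occ) (d : Nat) (hd : d ≤ s.length) :
    (∃ j₀, HE s d j₀ ∧ ∃ u, s[j₀]? = some u ∧ P u) ↔ EndsWith P (s.drop d) := by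
  constructor
  · rintro ⟨j₀, ⟨f, hf⟩, u, hu, hP⟩
    have hk := key_drop hd f 0
    rw [Nat.add_zero] at hk
    rw [hk] at hf
    obtain ⟨j₁, hj₁, rfl⟩ := Option.map_eq_some_iff.mp hf
    refine ⟨j₁, u, HE_herEnd.mpr ⟨f, hj₁⟩, ?_, hP⟩
    rw [List.getElem?_drop, show d + j₁ = j₁ + d by omega]
    exact hu
  · rintro ⟨j₁, u, hj, hu, hP⟩
    obtain ⟨f, hf⟩ := HE_herEnd.mp hj
    refine ⟨j₁ + d, ⟨f, ?_⟩, u, ?_, hP⟩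
    · have hk := key_drop hd f 0
      rw [Nat.add_zero] at hk
      rw [hk, hf]; rfl
    · rw [List.getElem?_drop] at hu
      rw [show j₁ + d = d + j₁ by omega]
      exact hu

theorem endsWith_step {P : Occ → Prop} {o : Occ} {s : List Occ} {j : Occ}
    (h1 : 1 ≤ o.dist) (hj : s[o.dist - 1]? = some j) :
    EndsWith P (o :: s) ↔ EndsWith P (s.drop (o.dist - 1)) := by
  have hdlen : o.dist - 1 < s.length := by
    obtain ⟨hlt, -⟩ := List.getElem?_eq_some_iff.mp hj
    exact hlt
  have hdle : o.dist ≤ (o :: s).length := by simp; omega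
  have hdrop : (o :: s).drop o.dist = s.drop (o.dist - 1) := by
    obtain ⟨d', hd'⟩ : ∃ d', o.dist = d' + 1 := ⟨o.dist - 1, by omega⟩
    rw [hd']; simp [hd']
  have hstep : ∀ j₀, HE (o :: s) 0 j₀ ↔ HE (o :: s) o.dist j₀ := by
    intro j₀
    constructor
    · rintro ⟨f, hf⟩
      obtain ⟨f', rfl⟩ : ∃ f', f = f' + 1 := by
        cases f with
        | zero => rw [chainEnd_zero] at hf; exact absurd hf (by simp)
        | succ f => exact ⟨f, rfl⟩
      rw [chainEnd_succ] at hf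
      rw [List.getElem?_cons_zero] at hf
      change (if o.dist = 0 then some 0 else chainEnd (o :: s) f' (0 + o.dist)) = some j₀ at hf
      rw [if_neg (by omega)] at hf
      exact ⟨f', by simpa using hf⟩
    · rintro ⟨f, hf⟩
      refine ⟨f + 1, ?_⟩
      rw [chainEnd_succ]
      rw [List.getElem?_cons_zero]
      change (if o.dist = 0 then some 0 else chainEnd (o :: s) f (0 + o.dist)) = some j₀
      rw [if_neg (by omega)]
      simpa using hf
  rw [← hdrop, ← endsWith_drop (o :: s) o.dist hdle]
  constructor
  · rintro ⟨j₀, u, hj₀, hu, hP⟩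
    exact ⟨j₀, (hstep j₀).mp (HE_herEnd.mp hj₀), u, hu, hP⟩
  · rintro ⟨j₀, hj₀, u, hu, hP⟩
    exact ⟨j₀, u, HE_herEnd.mpr ((hstep j₀).mpr hj₀), hu, hP⟩

theorem herRoot_not_herApp {T : CT} {s : List Occ}
    (hroot : kindAt T [] = some NKind.lam) :
    HerRoot s 0 → HerApp T s 0 → False := by
  rintro ⟨j, u, h1, h2, h3⟩ ⟨j', u', h1', h2', h3'⟩
  rw [h1] at h1'; cases h1'
  rw [h2] at h2'; cases h2'
  rw [h3] at h3'
  rw [show (ENode.s []).kindIn T = kindAt T [] from rfl, hroot] at h3'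
  exact absurd h3' (by simp)

end ULCX


set_option maxHeartbeats 1000000

namespace ULCX
open ULC

/-! ### Binder environments -/

def Slot {Γ₀ : Env} {T : CT} {A₀ : Ty} (D : WLd Γ₀ T A₀)
    (bp : Pos) (k : Nat) (A : Ty) : Prop :=
  1 ≤ k ∧ ∃ Δ' t' B d', tau D bp = some (.lamI Δ' t' B d') ∧ (tyArgs B)[k - 1]? = some A

def EnvR {Γ₀ : Env} {T : CT} {A₀ : Ty} (D : WLd Γ₀ T A₀)
    (benv : List (Name × (Pos × Nat))) (Δ : Env) : Prop :=
  ∃ Δ₁, Δ = Δ₁ ++ Γ₀ ∧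
    List.Forall₂ (fun be de => be.1 = de.1 ∧ Slot D be.2.1 be.2.2 de.2) benv Δ₁

theorem forall2_append {α β : Type _} {R : α → β → Prop} :
    ∀ {l₁ l₂ u₁ u₂}, List.Forall₂ R l₁ l₂ → List.Forall₂ R u₁ u₂ →
      List.Forall₂ R (l₁ ++ u₁) (l₂ ++ u₂) := by
  intro l₁ l₂ u₁ u₂ h hu
  induction h with
  | nil => simpa using hu
  | cons hR _ ih => exact List.Forall₂.cons hR ih

theorem forall2_rev {α β : Type _} {R : α → β → Prop} :
    ∀ {l₁ l₂}, List.Forall₂ R l₁ l₂ → List.Forall₂ R l₁.reverse l₂.reverse := by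
  intro l₁ l₂ h
  induction h with
  | nil => simp
  | cons hR _ ih =>
    simp only [List.reverse_cons]
    exact forall2_append ih (List.Forall₂.cons hR List.Forall₂.nil)

theorem lookup_cons_self {β : Type _} (x : Name) (v : β) (l : List (Name × β)) :
    List.lookup x ((x, v) :: l) = some v := by
  simp [List.lookup]

theorem lookup_cons_ne {β : Type _} {z x : Name} (h : ¬ z = x) (v : β)
    (l : List (Name × β)) : List.lookup z ((x, v) :: l) = List.lookup z l := by
  have hb : (z == x) = false := by
    simpa using h
  show (match z == x with | true => some v | false => List.lookup z l) = List.lookup z l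
  rw [hb]

theorem lookup_append {β : Type _} (l₁ l₂ : List (Name × β)) (z : Name) :
    (l₁ ++ l₂).lookup z = ((l₁.lookup z).orElse (fun _ => l₂.lookup z)) := by
  induction l₁ with
  | nil => rfl
  | cons a l ih =>
    obtain ⟨x, v⟩ := a
    by_cases hzx : z = x
    · subst hzx
      rw [List.cons_append, lookup_cons_self, lookup_cons_self]
      rfl
    · rw [List.cons_append, lookup_cons_ne hzx, lookup_cons_ne hzx, ih]

theorem forall2_lookup {Γ₀ : Env} {T : CT} {A₀ : Ty} {D : WLd Γ₀ T A₀} :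
    ∀ {benv : List (Name × (Pos × Nat))} {Δ₁ : Env},
      List.Forall₂ (fun be de => be.1 = de.1 ∧ Slot D be.2.1 be.2.2 de.2) benv Δ₁ →
      ∀ z bp k, benv.lookup z = some (bp, k) →
        ∃ A, Δ₁.lookup z = some A ∧ Slot D bp k A := by
  intro benv Δ₁ h
  induction h with
  | nil => intro z bp k hz; simp [List.lookup] at hz
  | @cons be de benv' Δ₁' hR hF ih =>
    intro z bp k hz
    obtain ⟨x, v⟩ := be
    obtain ⟨y, B⟩ := de
    obtain ⟨hxy, hslot⟩ := hR
    have hxy' : x = y := hxy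
    subst hxy'
    by_cases hzx : z = x
    · subst hzx
      rw [lookup_cons_self] at hz
      obtain rfl := Option.some.inj hz
      exact ⟨B, lookup_cons_self _ _ _, hslot⟩
    · rw [lookup_cons_ne hzx] at hz
      obtain ⟨A, hA, hs⟩ := ih z bp k hz
      exact ⟨A, by rw [lookup_cons_ne hzx]; exact hA, hs⟩

theorem envR_lookup {Γ₀ : Env} {T : CT} {A₀ : Ty} {D : WLd Γ₀ T A₀}
    {benv : List (Name × (Pos × Nat))} {Δ : Env} (h : EnvR D benv Δ)
    {z : Name} {bp : Pos} {k : Nat} (hz : benv.lookup z = some (bp, k)) :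
    ∃ A, Δ.lookup z = some A ∧ Slot D bp k A := by
  obtain ⟨Δ₁, rfl, hF⟩ := h
  obtain ⟨A, hA, hs⟩ := forall2_lookup hF z bp k hz
  refine ⟨A, ?_, hs⟩
  rw [lookup_append, hA]
  rfl

theorem forall2_newentries {Γ₀ : Env} {T : CT} {A₀ : Ty} (D : WLd Γ₀ T A₀) (p : Pos) :
    ∀ (xs : List Name) (As : List Ty) (i₀ : Nat),
      xs.length = As.length →
      (∀ j a, As[j]? = some a → Slot D p (i₀ + j + 1) a) →
      List.Forall₂ (fun be de => be.1 = de.1 ∧ Slot D be.2.1 be.2.2 de.2)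
        (((xs.zipIdx i₀).map Prod.swap).map (fun e => (e.2, (p, e.1 + 1)))) (xs.zip As) := by
  intro xs
  induction xs with
  | nil => intro As i₀ hlen _; cases As with
      | nil => simp
      | cons a As => simp at hlen
  | cons x xs ih =>
    intro As i₀ hlen hslot
    cases As with
    | nil => simp at hlen
    | cons a As =>
      simp only [List.zipIdx_cons, List.map_cons, Prod.swap_prod_mk, List.zip_cons_cons]
      refine List.Forall₂.cons ⟨rfl, ?_⟩ (ih As (i₀ + 1) (by simpa using hlen) ?_)
      · have := hslot 0 a (by simp)
        simpa using this
      · intro j a' hj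
        have := hslot (j + 1) a' (by simpa using hj)
        have heq : i₀ + (j + 1) + 1 = i₀ + 1 + j + 1 := by omega
        rwa [heq] at this

/-! ### The path environment correspondence -/

theorem ptEnv {Γ₀ : Env} {T : CT} {A₀ : Ty} (D : WLd Γ₀ T A₀) :
    ∀ (p : Pos) (i : Info), tau D p = some i →
      ∃ benv, EnvR D benv i.env ∧
        ∀ q', binderGo T (p ++ q') [] [] = binderGo i.tree q' p benv := by
  intro p
  induction p using List.reverseRecOn with
  | nil =>
    intro i h
    rw [tau_nil] at h; cases h
    exact ⟨[], ⟨[], rfl, List.Forall₂.nil⟩, fun q' => rfl⟩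
  | append_singleton p k ih =>
    intro i h
    rw [tau_append] at h
    obtain ⟨i₀, h₀, hstep⟩ := Option.bind_eq_some_iff.mp h
    obtain ⟨benv, hrel, hgo⟩ := ih i₀ h₀
    rcases i₀ with ⟨Δ, t, A, d⟩ | ⟨Δ, t, A, d⟩
    · -- lam node
      cases d with
      | @mk _ xs c _ B hlen ws =>
        cases k with
        | zero => exact absurd hstep (by simp [goStep])
        | succ k' =>
        cases k' with
        | succ n => exact absurd hstep (by simp [goStep])
        | zero =>
          have hi : i = Info.spI ((xs.zip (tyArgs A)).reverse ++ Δ) c B ws := by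
            have : goStep (Info.lamI Δ (CT.lam xs c) A (WLd.mk hlen ws)) 1
                = some (Info.spI ((xs.zip (tyArgs A)).reverse ++ Δ) c B ws) := rfl
            rw [this] at hstep
            exact (Option.some.inj hstep).symm
          subst hi
          obtain ⟨Δ₁, hΔ, hF⟩ := hrel
          have hΔ' : Δ = Δ₁ ++ Γ₀ := hΔ
          refine ⟨((xs.zipIdx.map Prod.swap).map (fun e => (e.2, (p, e.1 + 1)))).reverse ++ benv,
            ⟨(xs.zip (tyArgs A)).reverse ++ Δ₁, ?_, ?_⟩, ?_⟩
          · show (xs.zip (tyArgs A)).reverse ++ Δ = (xs.zip (tyArgs A)).reverse ++ Δ₁ ++ Γ₀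
            rw [hΔ']
            exact (List.append_assoc _ _ _).symm
          · refine forall2_append (forall2_rev ?_) hF
            have hxs : xs.zipIdx.map Prod.swap = (xs.zipIdx 0).map Prod.swap := rfl
            rw [hxs]
            refine forall2_newentries D p xs (tyArgs A) 0 (by simpa using hlen) ?_
            intro j a hj
            refine ⟨by omega, Δ, CT.lam xs c, A, WLd.mk hlen ws, h₀, ?_⟩
            simpa using hj
          · intro q'
            have := hgo (1 :: q')
            rw [List.append_assoc]
            rw [show ([1] : Pos) ++ q' = 1 :: q' from rfl]
            rw [this]
            rfl
    · -- spine node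
      cases d with
      | @var _ z cs _ hz dargs =>
        cases k with
        | zero => exact absurd hstep (by simp [goStep])
        | succ k =>
          have h' : (dargs.get k).map (fun x => Info.lamI Δ x.1 x.2.1 x.2.2) = some i := hstep
          obtain ⟨x, hx, hi⟩ := Option.map_eq_some_iff.mp h'
          subst hi
          refine ⟨benv, hrel, ?_⟩
          intro q'
          have := hgo ((k + 1) :: q')
          rw [List.append_assoc]
          rw [show ([k + 1] : Pos) ++ q' = (k + 1) :: q' from rfl]
          rw [this]
          show binderGo (CT.var z cs) ((k + 1) :: q') p benv
              = binderGo x.1 q' (p ++ [k + 1]) benv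
          have hred : binderGo (CT.var z cs) ((k + 1) :: q') p benv =
              (match cs[k]? with
               | some c => binderGo c q' (p ++ [k + 1]) benv
               | none => none) := rfl
          rw [hred, (WLsd.get_spec dargs k x hx).1]
      | @app _ xs c cs _ dop dargs =>
        cases k with
        | zero =>
          have hi : i = Info.lamI Δ (CT.lam xs c) A dop := by
            have : goStep (Info.spI Δ ((CT.lam xs c).app cs) A (WSd.app dop dargs)) 0
                = some (Info.lamI Δ (CT.lam xs c) A dop) := rfl
            rw [this] at hstep
            exact (Option.some.inj hstep).symm
          subst hi
          refine ⟨benv, hrel, ?_⟩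
          intro q'
          have := hgo (0 :: q')
          rw [List.append_assoc]
          rw [show ([0] : Pos) ++ q' = 0 :: q' from rfl]
          rw [this]
          rfl
        | succ k =>
          have h' : (dargs.get k).map (fun x => Info.lamI Δ x.1 x.2.1 x.2.2) = some i := hstep
          obtain ⟨x, hx, hi⟩ := Option.map_eq_some_iff.mp h'
          subst hi
          refine ⟨benv, hrel, ?_⟩
          intro q'
          have := hgo ((k + 1) :: q')
          rw [List.append_assoc]
          rw [show ([k + 1] : Pos) ++ q' = (k + 1) :: q' from rfl]
          rw [this]
          show binderGo ((CT.lam xs c).app cs) ((k + 1) :: q') p benv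
              = binderGo x.1 q' (p ++ [k + 1]) benv
          have hred : binderGo ((CT.lam xs c).app cs) ((k + 1) :: q') p benv =
              (match cs[k]? with
               | some c => binderGo c q' (p ++ [k + 1]) benv
               | none => none) := rfl
          rw [hred, (WLsd.get_spec dargs k x hx).1]

end ULCX


set_option maxHeartbeats 1000000

namespace ULCX
open ULC

/-! ### The traversal invariant -/

section InvDef

variable {Γ₀ : Env} {T : CT} {A₀ : Ty}

def LamInv (D : WLd Γ₀ T A₀) (o : Occ) (s : List Occ) (p : Pos) (A : Ty) : Prop :=
  (p = [] ∧ s = []) ∨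
  (p ≠ [] ∧ 1 ≤ o.dist ∧ ∃ m s' pm, s = m :: s' ∧ m.node = ENode.s pm ∧
    (HerRoot (o :: s) 0 ↔ HerRoot s 0) ∧ (HerApp T (o :: s) 0 ↔ HerApp T s 0) ∧
    (HerApp T (o :: s) 0 → ∃ Δ' t' d', tau D pm = some (.spI Δ' t' A d')))

def VarInv (D : WLd Γ₀ T A₀) (o : Occ) (s : List Occ) (A : Ty) : Prop :=
  1 ≤ o.dist ∧ 1 ≤ o.jlab ∧ ∃ j, s[o.dist - 1]? = some j ∧
  (HerRoot (o :: s) 0 ↔ HerRoot (s.drop (o.dist - 1)) 0) ∧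
  (HerApp T (o :: s) 0 ↔ HerApp T (s.drop (o.dist - 1)) 0) ∧
  ∃ bp, j.node = ENode.s bp ∧
    (bp = [] ∨ ∃ Δ' t' B d', tau D bp = some (.lamI Δ' t' B d') ∧
      (tyArgs B)[o.jlab - 1]? = some A)

def Inv (D : WLd Γ₀ T A₀) (o : Occ) (s : List Occ) : Prop :=
  ∃ p, o.node = ENode.s p ∧
  ((∃ Δ t A d, tau D p = some (.lamI Δ t A d) ∧ LamInv D o s p A) ∨
   (∃ Δ z cs A d, tau D p = some (.spI Δ (.var z cs) A d) ∧ VarInv D o s A) ∨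
   (∃ Δ op cs A d, tau D p = some (.spI Δ (.app op cs) A d) ∧ o.dist = 0))

def Good (D : WLd Γ₀ T A₀) (s : List Occ) : Prop :=
  ∀ o s', (o :: s') <:+ s → Inv D o s'

theorem good_suffix {D : WLd Γ₀ T A₀} {s u : List Occ} (h : Good D s) (hu : u <:+ s) :
    Good D u := fun o s' hs => h o s' (hs.trans hu)

theorem good_cons {D : WLd Γ₀ T A₀} {o : Occ} {s : List Occ}
    (hI : Inv D o s) (hg : Good D s) : Good D (o :: s) := by
  intro o' s' hs
  rcases List.suffix_cons_iff.mp hs with heq | hs'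
  · obtain ⟨rfl, rfl⟩ := List.cons.inj heq
    exact hI
  · exact hg o' s' hs'

/-! ### Bridges between occurrences and the typed tree -/

theorem kindIn_of_tau {D : WLd Γ₀ T A₀} {p : Pos} {i : Info} (h : tau D p = some i) :
    (ENode.s p).kindIn T = some i.tree.kind := by
  show kindAt T p = some i.tree.kind
  simp [kindAt, tau_node D p i h]

theorem arityIn_of_tau {D : WLd Γ₀ T A₀} {p : Pos} {i : Info} (h : tau D p = some i) :
    (ENode.s p).arityIn T = i.tree.arity := by
  show arityAt T p = i.tree.arity
  simp [arityAt, tau_node D p i h]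

theorem kindAt_of_tau {D : WLd Γ₀ T A₀} {p : Pos} {i : Info} (h : tau D p = some i) :
    kindAt T p = some i.tree.kind := by
  simp [kindAt, tau_node D p i h]

theorem root_kind (D : WLd Γ₀ T A₀) : kindAt T [] = some NKind.lam := by
  obtain ⟨xs, c, hT⟩ := tau_root_lam D
  subst hT
  simp [kindAt, CT.nodeAt, CT.kind]

/-! ### Selecting the invariant branch -/

theorem inv_get_lam' {D : WLd Γ₀ T A₀} {j : Occ} {s' : List Occ} {bp : Pos}
    {Δ : Env} {t : CT} {A : Ty} {d : WLd Δ t A}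
    (h : Inv D j s') (hnode : j.node = ENode.s bp)
    (htau : tau D bp = some (.lamI Δ t A d)) : LamInv D j s' bp A := by
  obtain ⟨p', hnode', hdisj⟩ := h
  rw [hnode] at hnode'
  obtain rfl : bp = p' := ENode.s.inj hnode'
  rcases hdisj with ⟨Δ2, t2, A2, d2, htau2, hL⟩ | ⟨_, _, _, _, _, htau2, _⟩ |
    ⟨_, _, _, _, _, htau2, _⟩
  · rw [htau] at htau2
    have heq := Option.some.inj htau2
    injection heq with e1 e2 e3 e4
    subst e3
    exact hL
  · rw [htau] at htau2
    exact absurd (Option.some.inj htau2) (by simp)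
  · rw [htau] at htau2
    exact absurd (Option.some.inj htau2) (by simp)

theorem inv_get_varInv {D : WLd Γ₀ T A₀} {n : Occ} {s : List Occ} {pn : Pos}
    (h : Inv D n s) (hnode : n.node = ENode.s pn)
    (hk : kindAt T pn = some NKind.var) :
    ∃ Δ z cs A d, tau D pn = some (.spI Δ (.var z cs) A d) ∧ VarInv D n s A := by
  obtain ⟨p', hnode', hdisj⟩ := h
  rw [hnode] at hnode'
  obtain rfl : pn = p' := ENode.s.inj hnode'
  rcases hdisj with ⟨Δ, t, A, d, htau, _⟩ | ⟨Δ, z, cs, A, d, htau, hV⟩ |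
    ⟨Δ, op, cs, A, d, htau, _⟩
  · obtain ⟨xs, c, rfl, _⟩ := lam_shape d
    rw [kindAt_of_tau htau] at hk
    exact absurd (Option.some.inj hk) (by simp [Info.tree, CT.kind])
  · exact ⟨Δ, z, cs, A, d, htau, hV⟩
  · rw [kindAt_of_tau htau] at hk
    exact absurd (Option.some.inj hk) (by simp [Info.tree, CT.kind])

theorem inv_get_app {D : WLd Γ₀ T A₀} {o : Occ} {s : List Occ} {p : Pos}
    (h : Inv D o s) (hnode : o.node = ENode.s p)
    (hk : kindAt T p = some NKind.app) :
    ∃ Δ op cs A d, tau D p = some (.spI Δ (.app op cs) A d) ∧ o.dist = 0 := by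
  obtain ⟨p', hnode', hdisj⟩ := h
  rw [hnode] at hnode'
  obtain rfl : p = p' := ENode.s.inj hnode'
  rcases hdisj with ⟨Δ, t, A, d, htau, _⟩ | ⟨Δ, z, cs, A, d, htau, _⟩ |
    ⟨Δ, op, cs, A, d, htau, hd0⟩
  · obtain ⟨xs, c, rfl, _⟩ := lam_shape d
    rw [kindAt_of_tau htau] at hk
    exact absurd (Option.some.inj hk) (by simp [Info.tree, CT.kind])
  · rw [kindAt_of_tau htau] at hk
    exact absurd (Option.some.inj hk) (by simp [Info.tree, CT.kind])
  · exact ⟨Δ, op, cs, A, d, htau, hd0⟩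

theorem inv_get_lamBranch {D : WLd Γ₀ T A₀} {o : Occ} {s : List Occ} {p : Pos}
    (h : Inv D o s) (hnode : o.node = ENode.s p)
    (hk : kindAt T p = some NKind.lam) :
    ∃ Δ t A d, tau D p = some (.lamI Δ t A d) ∧ LamInv D o s p A := by
  obtain ⟨p', hnode', hdisj⟩ := h
  rw [hnode] at hnode'
  obtain rfl : p = p' := ENode.s.inj hnode'
  rcases hdisj with ⟨Δ, t, A, d, htau, hL⟩ | ⟨Δ, z, cs, A, d, htau, _⟩ |
    ⟨Δ, op, cs, A, d, htau, _⟩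
  · exact ⟨Δ, t, A, d, htau, hL⟩
  · rw [kindAt_of_tau htau] at hk
    exact absurd (Option.some.inj hk) (by simp [Info.tree, CT.kind])
  · rw [kindAt_of_tau htau] at hk
    exact absurd (Option.some.inj hk) (by simp [Info.tree, CT.kind])

end InvDef

/-! ### Misc list helpers -/

theorem drop_cons_of_get {s : List Occ} {i : Nat} {j : Occ} (h : s[i]? = some j) :
    s.drop i = j :: s.drop (i + 1) := by
  obtain ⟨hlt, hget⟩ := List.getElem?_eq_some_iff.mp h
  rw [List.drop_eq_getElem_cons hlt, hget]

theorem snoc_inj {p q : Pos} {a b : Nat} (h : p ++ [a] = q ++ [b]) : p = q ∧ a = b := by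
  have h1 := congrArg List.reverse h
  simp at h1
  exact ⟨h1.2, h1.1⟩

/-! ### O-view equations -/

theorem ov_nil (T : CT) : oviewIdx T [] = [] := by rw [oviewIdx]

theorem ov_cons_lam {T : CT} {o : Occ} {s : List Occ}
    (h : o.node.kindIn T = some NKind.lam) :
    oviewIdx T (o :: s) = 0 :: (oviewIdx T s).map (fun i => i + 1) := by
  rw [oviewIdx]; simp [h]

theorem ov_cons_zero {T : CT} {o : Occ} {s : List Occ}
    (h : ¬ o.node.kindIn T = some NKind.lam) (hd : o.dist = 0) :
    oviewIdx T (o :: s) = [0] := by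
  rw [oviewIdx]; simp [h, hd]

theorem ov_cons_var {T : CT} {o : Occ} {s : List Occ}
    (h : ¬ o.node.kindIn T = some NKind.lam) (hd : o.dist ≠ 0) :
    oviewIdx T (o :: s) =
      0 :: o.dist :: ((oviewIdx T (s.drop o.dist)).map (fun i => i + o.dist + 1)) := by
  rw [oviewIdx]; simp [h, hd]

/-! ### Variables in the O-view of a root-headed traversal are root-headed -/

theorem oview_root {Γ₀ : Env} {T : CT} {A₀ : Ty} (D : WLd Γ₀ T A₀) :
    ∀ (N : Nat) (s : List Occ), s.length ≤ N → Good D s → HerRoot s 0 →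
      ∀ jm ∈ oviewIdx T s, ∀ m, s[jm]? = some m →
        m.node.kindIn T = some NKind.var → HerRoot (s.drop jm) 0 := by
  intro N
  induction N with
  | zero =>
    intro s hlen _ _ jm hjm m hm _
    have hs : s = [] := List.length_eq_zero_iff.mp (by omega)
    subst hs
    rw [ov_nil] at hjm
    simp at hjm
  | succ N ih =>
    intro s hlen hg hr jm hjm m hm hkind
    cases s with
    | nil => rw [ov_nil] at hjm; simp at hjm
    | cons o s' =>
      have hInv : Inv D o s' := hg o s' (List.suffix_refl _)
      obtain ⟨p, hnode, hdisj⟩ := hInv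
      rcases hdisj with ⟨Δ, t, A, d, htau, hL⟩ | ⟨Δ, z, cs, A, d, htau, hV⟩ |
        ⟨Δ, op, cs, A, d, htau, hdist⟩
      · -- lambda head
        obtain ⟨xs, c, rfl, _⟩ := lam_shape d
        have hk : o.node.kindIn T = some NKind.lam := by
          rw [hnode, kindIn_of_tau htau]; rfl
        rw [ov_cons_lam hk] at hjm
        rcases List.mem_cons.mp hjm with rfl | hjm'
        · rw [List.getElem?_cons_zero] at hm
          cases hm
          rw [hk] at hkind
          exact absurd hkind (by simp)
        · obtain ⟨j', hj', rfl⟩ := List.mem_map.mp hjm'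
          rcases hL with ⟨hp, rfl⟩ | ⟨hp, hd, m₀, s'', pm, heq, hm₀, hiffR, hiffA, _⟩
          · rw [ov_nil] at hj'; simp at hj'
          · have hr' : HerRoot s' 0 := hiffR.mp hr
            have hgood' : Good D s' := good_suffix hg (List.suffix_cons o s')
            have hc := ih s' (by simpa using Nat.le_of_succ_le_succ hlen) hgood' hr'
              j' hj' m (by rw [List.getElem?_cons_succ] at hm; exact hm) hkind
            exact hc
      · -- variable head
        obtain ⟨hd1, hjl1, j, hjget, hiffR, hiffA, bp, hbpnode, halt⟩ := hV
        have hkv : o.node.kindIn T = some NKind.var := by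
          rw [hnode, kindIn_of_tau htau]; rfl
        have hknotlam : ¬ o.node.kindIn T = some NKind.lam := by
          rw [hkv]; simp
        rw [ov_cons_var hknotlam (by omega)] at hjm
        rcases List.mem_cons.mp hjm with rfl | hjm'
        · rw [List.getElem?_cons_zero] at hm
          cases hm
          simpa using hr
        rcases List.mem_cons.mp hjm' with rfl | hjm''
        · -- jm = o.dist : the binder occurrence, a lambda
          obtain ⟨d', hd'⟩ : ∃ d', o.dist = d' + 1 := ⟨o.dist - 1, by omega⟩
          rw [hd', List.getElem?_cons_succ] at hm
          rw [show d' = o.dist - 1 by omega] at hm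
          rw [hjget] at hm
          cases hm
          have hjlam : m.node.kindIn T = some NKind.lam := by
            rcases halt with rfl | ⟨Δ', t', B, dd, htaubp, _⟩
            · rw [hbpnode, kindIn_of_tau (tau_nil D)]
              obtain ⟨xs0, c0, hT⟩ := tau_root_lam D
              simp [Info.tree, hT, CT.kind]
            · obtain ⟨xs0, c0, rfl, _⟩ := lam_shape dd
              rw [hbpnode, kindIn_of_tau htaubp]; rfl
          rw [hjlam] at hkind
          exact absurd hkind (by simp)
        · obtain ⟨j'', hj'', rfl⟩ := List.mem_map.mp hjm''
          have hdrop1 : s'.drop (o.dist - 1) = j :: s'.drop o.dist := by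
            have hh := drop_cons_of_get hjget
            rwa [show o.dist - 1 + 1 = o.dist by omega] at hh
          have hrj : HerRoot (j :: s'.drop o.dist) 0 := by
            rw [← hdrop1]; exact hiffR.mp hr
          have hsufJ : (j :: s'.drop o.dist) <:+ (o :: s') := by
            rw [← hdrop1]
            exact (List.drop_suffix _ _).trans (List.suffix_cons o s')
          have hInvJ : Inv D j (s'.drop o.dist) := hg j _ hsufJ
          have hLJ : ∃ AJ, LamInv D j (s'.drop o.dist) bp AJ := by
            rcases halt with rfl | ⟨Δ', t', B, dd, htaubp, _⟩
            · exact ⟨A₀, inv_get_lam' hInvJ hbpnode (tau_nil D)⟩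
            · exact ⟨B, inv_get_lam' hInvJ hbpnode htaubp⟩
          obtain ⟨AJ, hLJ⟩ := hLJ
          rcases hLJ with ⟨hbpnil, hnil⟩ | ⟨_, _, m₂, s₂, pm₂, heq₂, _, hiffRJ, _, _⟩
          · rw [hnil, ov_nil] at hj''; simp at hj''
          · have hrtail : HerRoot (s'.drop o.dist) 0 := hiffRJ.mp hrj
            have hgood2 : Good D (s'.drop o.dist) :=
              good_suffix hg ((List.drop_suffix _ _).trans (List.suffix_cons o s'))
            have hlen2 : (s'.drop o.dist).length ≤ N := by
              have : (s'.drop o.dist).length = s'.length - o.dist := List.length_drop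
              simp at hlen
              omega
            have hm2 : (s'.drop o.dist)[j'']? = some m := by
              rw [List.getElem?_drop]
              rw [show j'' + o.dist + 1 = (j'' + o.dist) + 1 from rfl,
                List.getElem?_cons_succ] at hm
              rw [show o.dist + j'' = j'' + o.dist by omega]
              exact hm
            have hc := ih _ hlen2 hgood2 hrtail j'' hj'' m hm2 hkind
            have hfin : (o :: s').drop (j'' + o.dist + 1) = (s'.drop o.dist).drop j'' := by
              rw [show (o :: s').drop (j'' + o.dist + 1) = s'.drop (j'' + o.dist) from rfl]
              rw [List.drop_drop, Nat.add_comm j'' o.dist]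
            rw [hfin]
            exact hc
      · -- application head
        have hka : o.node.kindIn T = some NKind.app := by
          rw [hnode, kindIn_of_tau htau]; rfl
        have hknotlam : ¬ o.node.kindIn T = some NKind.lam := by
          rw [hka]; simp
        rw [ov_cons_zero hknotlam hdist] at hjm
        simp at hjm
        subst hjm
        rw [List.getElem?_cons_zero] at hm
        cases hm
        rw [hka] at hkind
        exact absurd hkind (by simp)

end ULCX


set_option maxHeartbeats 1000000

namespace ULCX
open ULC

section Main

variable {Γ₀ : Env} {T : CT} {A₀ : Ty}

/-- Core analysis of a variable occurrence with an @-rooted pointer chain. -/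
theorem var_core (D : WLd Γ₀ T A₀) {n m : Occ} {s : List Occ}
    (hg : Good D (n :: s)) {pn : Pos}
    (hnode : n.node = ENode.s pn) (hkv : kindAt T pn = some NKind.var)
    (hApp : HerApp T (n :: s) 0)
    (hmget : s[n.dist]? = some m) :
    ∃ Δn z cs An dn pm,
      tau D pn = some (.spI Δn (.var z cs) An dn) ∧ m.node = ENode.s pm ∧
      (∃ Δ3 t3 B d3, tau D pm = some (.spI Δ3 t3 B d3) ∧
        (tyArgs B)[n.jlab - 1]? = some An) ∧
      (HerRoot (n :: s) 0 ↔ HerRoot (s.drop n.dist) 0) ∧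
      (HerApp T (n :: s) 0 ↔ HerApp T (s.drop n.dist) 0) := by
  have hInvN : Inv D n s := hg n s (List.suffix_refl _)
  obtain ⟨Δn, z, cs, An, dn, htaun, hVn⟩ := inv_get_varInv hInvN hnode hkv
  obtain ⟨hd1, hjl1, j, hjget, hiffR, hiffA, bp, hbpnode, halt⟩ := hVn
  have hdrop1 : s.drop (n.dist - 1) = j :: s.drop n.dist := by
    have hh := drop_cons_of_get hjget
    rwa [show n.dist - 1 + 1 = n.dist by omega] at hh
  have hdropm : s.drop n.dist = m :: s.drop (n.dist + 1) := drop_cons_of_get hmget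
  have hsufJ : (j :: s.drop n.dist) <:+ (n :: s) := by
    rw [← hdrop1]
    exact (List.drop_suffix _ _).trans (List.suffix_cons n s)
  have hInvJ : Inv D j (s.drop n.dist) := hg j _ hsufJ
  rw [hdrop1] at hiffR hiffA
  rcases halt with rfl | ⟨Δ', t', B, dd, htaubp, hidx⟩
  · -- the binder is the root: impossible since m exists after it
    have hLJ := inv_get_lam' hInvJ hbpnode (tau_nil D)
    rcases hLJ with ⟨-, hnil⟩ | ⟨hbpne, -⟩
    · rw [hdropm] at hnil; exact absurd hnil (by simp)
    · exact absurd rfl hbpne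
  · have hLJ := inv_get_lam' hInvJ hbpnode htaubp
    rcases hLJ with ⟨-, hnil⟩ | ⟨-, -, m₂, s₂, pm₂, heq₂, hm₂node, hiffRJ, hiffAJ, htyped⟩
    · rw [hdropm] at hnil; exact absurd hnil (by simp)
    · rw [hdropm] at heq₂
      obtain ⟨rfl, -⟩ : m₂ = m ∧ s₂ = s.drop (n.dist + 1) :=
        ⟨(List.cons.inj heq₂).1.symm, (List.cons.inj heq₂).2.symm⟩
      have hAppJ : HerApp T (j :: s.drop n.dist) 0 := hiffA.mp hApp
      obtain ⟨Δ3, t3, d3, htau3⟩ := htyped hAppJ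
      refine ⟨Δn, z, cs, An, dn, pm₂, htaun, hm₂node,
        ⟨Δ3, t3, B, d3, htau3, hidx⟩, ?_, ?_⟩
      · exact hiffR.trans hiffRJ
      · exact hiffA.trans hiffAJ

/-- The eta-expanded subcase of rule Var can never fire. -/
theorem varE_absurd (D : WLd Γ₀ T A₀) {n m : Occ} {s : List Occ}
    (hg : Good D (n :: s))
    (hkindN : n.node.kindIn T = some NKind.var)
    (hApp : HerApp T (n :: s) 0)
    (hmget : s[n.dist]? = some m)
    (harity : m.node.arityIn T < n.jlab) : False := by
  obtain ⟨pn, hnode, -⟩ := hg n s (List.suffix_refl _)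
  have hkv : kindAt T pn = some NKind.var := by rw [hnode] at hkindN; exact hkindN
  obtain ⟨Δn, z, cs, An, dn, pm, htaun, hmnode, ⟨Δ3, t3, B, d3, htau3, hidx⟩, -, -⟩ :=
    var_core D hg hnode hkv hApp hmget
  have hlt : n.jlab - 1 < (tyArgs B).length := by
    obtain ⟨hh, -⟩ := List.getElem?_eq_some_iff.mp hidx
    exact hh
  have har : m.node.arityIn T = (tyArgs B).length := by
    rw [hmnode, arityIn_of_tau htau3]
    exact sp_arity d3
  have hjl : 1 ≤ n.jlab := by
    by_contra hc
    have : n.jlab = 0 := by omega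
    rw [this] at harity
    omega
  omega

/-- All traversals (without the eta-expanded IVar subcase) satisfy the invariant. -/
theorem trav_good (D : WLd Γ₀ T A₀) :
    ∀ {t : List Occ}, TravR T ⟨false, false, true, false, true⟩ t → Good D t := by
  intro t h
  induction h with
  | root =>
    intro o' s' hs
    rcases List.suffix_cons_iff.mp hs with heq | h2
    · obtain ⟨rfl, rfl⟩ := List.cons.inj heq
      exact ⟨[], rfl, Or.inl ⟨Γ₀, T, A₀, D, tau_nil D, Or.inl ⟨rfl, rfl⟩⟩⟩
    · have := List.eq_nil_of_suffix_nil h2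
      exact absurd this (by simp)
  | @app s o p h hnodeO hkApp ih =>
    refine good_cons ?_ ih
    obtain ⟨Δ, op, cs, A, dsp, htau, -⟩ := inv_get_app (ih o s (List.suffix_refl _)) hnodeO hkApp
    obtain ⟨dop, htaunew⟩ := tau_step_op D htau
    refine ⟨p ++ [0], rfl, Or.inl ⟨Δ, op, A, dop, htaunew, ?_⟩⟩
    refine Or.inr ⟨by simp, by show 1 ≤ 1; omega, o, s, p, rfl, hnodeO, ?_, ?_,
      fun _ => ⟨Δ, .app op cs, dsp, htau⟩⟩
    · have hiff := endsWith_step (P := fun u => u.node = ENode.s [])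
        (o := ⟨.s (p ++ [0]), 1, 0, []⟩) (s := o :: s) (by show 1 ≤ 1; omega)
        (by show (o :: s)[(1 : Nat) - 1]? = some o; simp)
      rw [show (1 : Nat) - 1 = 0 from rfl, List.drop_zero] at hiff
      exact hiff
    · have hiff := endsWith_step (P := fun u => u.node.kindIn T = some .app)
        (o := ⟨.s (p ++ [0]), 1, 0, []⟩) (s := o :: s) (by show 1 ≤ 1; omega)
        (by show (o :: s)[(1 : Nat) - 1]? = some o; simp)
      rw [show (1 : Nat) - 1 = 0 from rfl, List.drop_zero] at hiff
      exact hiff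
  | @lamApp s o p h hnodeO hkLam hkApp ih =>
    refine good_cons ?_ ih
    obtain ⟨Δ, t, A, dL, htau, -⟩ := inv_get_lamBranch (ih o s (List.suffix_refl _)) hnodeO hkLam
    obtain ⟨xs, c, B, ws, rfl, htau1⟩ := tau_step_body D htau
    rcases sp_shape ws with ⟨z, cs, hc, -, -⟩ | ⟨xs2, c2, cs2, hc, -⟩
    · -- c is a variable node, contradicting kindAt = app
      rw [kindAt_of_tau htau1] at hkApp
      have hk2 : c.kind = NKind.app := Option.some.inj hkApp
      rw [hc] at hk2
      exact absurd hk2 (by simp [CT.kind])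
    · subst hc
      exact ⟨p ++ [1], rfl, Or.inr (Or.inr ⟨_, _, _, B, ws, htau1, rfl⟩)⟩
  | @lamVar s o j p bp d k h hnodeO hkLam hkVar hd hjget hjnode hEn hpv ih =>
    refine good_cons ?_ ih
    obtain ⟨Δ, t, A, dL, htau, -⟩ := inv_get_lamBranch (ih o s (List.suffix_refl _)) hnodeO hkLam
    obtain ⟨xs, c, B, ws, rfl, htau1⟩ := tau_step_body D htau
    rcases sp_shape ws with ⟨z, cs, hc, hlook, hlen⟩ | ⟨xs2, c2, cs2, hc, -⟩
    swap
    · rw [kindAt_of_tau htau1] at hkVar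
      have hk2 : c.kind = NKind.var := Option.some.inj hkVar
      rw [hc] at hk2
      exact absurd hk2 (by simp [CT.kind])
    subst hc
    have key : 1 ≤ k ∧ (bp = [] ∨ ∃ Δ' t' B' d', tau D bp = some (.lamI Δ' t' B' d') ∧
        (tyArgs B')[k - 1]? = some B) := by
      rcases hEn with ⟨heq, -, hkbp⟩ | ⟨-, hbind⟩ | ⟨-, rfl, z', cs', -, hkval⟩
      · obtain ⟨rfl, rfl⟩ := snoc_inj heq
        rcases hkbp with hkb | hkb <;> rw [hkLam] at hkb <;>
          exact absurd (Option.some.inj hkb) (by simp)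
      · obtain ⟨benv, hrel, hgo⟩ := ptEnv D (p ++ [1]) _ htau1
        have hgo0 := hgo []
        rw [List.append_nil] at hgo0
        have hlookup : benv.lookup z = some (bp, k) := by
          have hbig : binderInCT T (p ++ [1]) = benv.lookup z := by
            rw [show binderInCT T (p ++ [1]) = binderGo T (p ++ [1]) [] [] from rfl, hgo0]
            rfl
          rw [← hbig]
          exact hbind
        obtain ⟨A', hlookΔ, hslot⟩ := envR_lookup hrel hlookup
        have hAB : A' = B := by
          have : ((xs.zip (tyArgs A)).reverse ++ Δ).lookup z = some A' := hlookΔ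
          rw [hlook] at this
          exact (Option.some.inj this).symm
        obtain ⟨hk1, Δ'', t'', B'', d'', htaubp, hidx⟩ := hslot
        exact ⟨hk1, Or.inr ⟨Δ'', t'', B'', d'', htaubp, by rw [← hAB]; exact hidx⟩⟩
      · exact ⟨by omega, Or.inl rfl⟩
    refine ⟨p ++ [1], rfl, Or.inr (Or.inl ⟨_, z, cs, B, ws, htau1, ?_⟩)⟩
    refine ⟨by show 1 ≤ d; omega, by show 1 ≤ k; exact key.1, j,
      (by show (o :: s)[d - 1]? = some j; exact hjget), ?_, ?_, bp, hjnode, key.2⟩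
    · exact endsWith_step (P := fun u => u.node = ENode.s [])
        (o := ⟨.s (p ++ [1]), d, k, []⟩) (s := o :: s) (by show 1 ≤ d; omega) hjget
    · exact endsWith_step (P := fun u => u.node.kindIn T = some .app)
        (o := ⟨.s (p ++ [1]), d, k, []⟩) (s := o :: s) (by show 1 ≤ d; omega) hjget
  | @lamGhost s gl nn aa hflag h hghost hkind hdist hn ha hkn hka ih =>
    have hInv := ih gl s (List.suffix_refl _)
    obtain ⟨p, hnode, -⟩ := hInv
    rw [hnode] at hghost
    exact absurd hghost (by simp [ENode.isGhost])
  | @varC s n a m q h hkindN hApp hd1 hjl1 haget hak hmget hmkind hmnode hjle ih =>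
    refine good_cons ?_ ih
    obtain ⟨pn, hnode, -⟩ := ih n s (List.suffix_refl _)
    have hkv : kindAt T pn = some NKind.var := by rw [hnode] at hkindN; exact hkindN
    obtain ⟨Δn, z, cs, An, dn, pm, htaun, hmnode', hTY, hiffR, hiffA⟩ :=
      var_core D ih hnode hkv hApp hmget
    obtain ⟨Δ3, t3, B, d3, htau3, hidx⟩ := hTY
    have hq : pm = q := ENode.s.inj (hmnode'.symm.trans hmnode)
    rw [hq] at htau3
    have hle : n.jlab ≤ (tyArgs B).length := by
      obtain ⟨hlt, -⟩ := List.getElem?_eq_some_iff.mp hidx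
      omega
    obtain ⟨cnew, Bnew, dnew, hBnew, htaunew⟩ := tau_step_arg D n.jlab hjl1 htau3 hle
    have hBA : Bnew = An := by
      rw [hidx] at hBnew
      exact (Option.some.inj hBnew).symm
    subst hBA
    refine ⟨q ++ [n.jlab], rfl, Or.inl ⟨Δ3, cnew, Bnew, dnew, htaunew, ?_⟩⟩
    refine Or.inr ⟨by simp, by show 1 ≤ n.dist + 2; omega, n, s, pn, rfl, hnode, ?_, ?_,
      fun _ => ⟨Δn, .var z cs, dn, htaun⟩⟩
    · have hiff := endsWith_step (P := fun u => u.node = ENode.s [])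
        (o := ⟨.s (q ++ [n.jlab]), n.dist + 2, n.jlab, []⟩) (s := n :: s)
        (by show 1 ≤ n.dist + 2; omega)
        (by show (n :: s)[n.dist + 2 - 1]? = some m
            rw [show n.dist + 2 - 1 = n.dist + 1 by omega, List.getElem?_cons_succ]
            exact hmget)
      rw [show n.dist + 2 - 1 = n.dist + 1 by omega] at hiff
      rw [show (n :: s).drop (n.dist + 1) = s.drop n.dist from rfl] at hiff
      exact hiff.trans hiffR.symm
    · have hiff := endsWith_step (P := fun u => u.node.kindIn T = some .app)
        (o := ⟨.s (q ++ [n.jlab]), n.dist + 2, n.jlab, []⟩) (s := n :: s)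
        (by show 1 ≤ n.dist + 2; omega)
        (by show (n :: s)[n.dist + 2 - 1]? = some m
            rw [show n.dist + 2 - 1 = n.dist + 1 by omega, List.getElem?_cons_succ]
            exact hmget)
      rw [show n.dist + 2 - 1 = n.dist + 1 by omega] at hiff
      rw [show (n :: s).drop (n.dist + 1) = s.drop n.dist from rfl] at hiff
      exact hiff.trans hiffA.symm
  | @varE s n a m hflag h hkindN hApp hd1 hjl1 haget hak hmget hmkind harity ih =>
    exact absurd harity (by
      have := varE_absurd D ih hkindN hApp hmget
      intro hc
      exact this hc)
  | @ivarC s n m q jm i h hkindN hbr1 hbr2 hi1 hmget hmkind hjmem hbr3 hbound hmnode hile ih =>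
    refine good_cons ?_ ih
    have hroot : HerRoot (n :: s) 0 := hbr2 rfl
    have hRm : HerRoot ((n :: s).drop jm) 0 :=
      oview_root D (n :: s).length (n :: s) le_rfl ih hroot jm hjmem m hmget hmkind
    have hmsuffix : (m :: (n :: s).drop (jm + 1)) <:+ (n :: s) := by
      rw [← drop_cons_of_get hmget]
      exact List.drop_suffix _ _
    have hInvM : Inv D m ((n :: s).drop (jm + 1)) := ih m _ hmsuffix
    have hkvm : kindAt T q = some NKind.var := by rw [hmnode] at hmkind; exact hmkind
    obtain ⟨Δm, z, cs, Am, dm, htaum, -⟩ := inv_get_varInv hInvM hmnode hkvm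
    have haq : arityAt T q = (tyArgs Am).length := by
      rw [show arityAt T q = (ENode.s q).arityIn T from rfl, arityIn_of_tau htaum]
      exact sp_arity dm
    obtain ⟨cnew, Bnew, dnew, hBnew, htaunew⟩ := tau_step_arg D i hi1 htaum (by omega)
    obtain ⟨pn, hnoden, -⟩ := ih n s (List.suffix_refl _)
    have hstepR := endsWith_step (P := fun u => u.node = ENode.s [])
      (o := ⟨.s (q ++ [i]), jm + 1, i, []⟩) (s := n :: s) (by show 1 ≤ jm + 1; omega)
      (by show (n :: s)[jm + 1 - 1]? = some m
          rw [show jm + 1 - 1 = jm by omega]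
          exact hmget)
    have hstepA := endsWith_step (P := fun u => u.node.kindIn T = some .app)
      (o := ⟨.s (q ++ [i]), jm + 1, i, []⟩) (s := n :: s) (by show 1 ≤ jm + 1; omega)
      (by show (n :: s)[jm + 1 - 1]? = some m
          rw [show jm + 1 - 1 = jm by omega]
          exact hmget)
    rw [show jm + 1 - 1 = jm by omega] at hstepR hstepA
    have hdropeq : (n :: s).drop jm = (n :: s).drop jm := rfl
    refine ⟨q ++ [i], rfl, Or.inl ⟨Δm, cnew, Bnew, dnew, htaunew, ?_⟩⟩
    refine Or.inr ⟨by simp, by show 1 ≤ jm + 1; omega, n, s, pn, rfl, hnoden, ?_, ?_, ?_⟩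
    · exact Iff.intro (fun _ => hroot) (fun _ => hstepR.mpr hRm)
    · refine iff_of_false ?_ ?_
      · intro hA
        exact herRoot_not_herApp (root_kind D) hRm (hstepA.mp hA)
      · intro hA
        exact herRoot_not_herApp (root_kind D) hroot hA
    · intro hA
      exact absurd (hstepA.mp hA) (fun x => herRoot_not_herApp (root_kind D) hRm x)
  | @ivarE s n m jm i hflag h hkindN hbr1 hbr2 hi1 hmget hmkind hjmem hbr3 hbound harity ih =>
    exact absurd hflag (by decide)

end Main

end ULCX


set_option maxHeartbeats 1000000

namespace ULCX
open ULC

theorem stlc_to_noeta (T : CT) :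
    ∀ {t : List Occ}, TravR T ⟨false, false, false, false, false⟩ t →
      TravR T ⟨false, false, true, false, true⟩ t := by
  intro t h
  induction h with
  | root => exact .root
  | app h h1 h2 ih => exact .app ih h1 h2
  | lamApp h h1 h2 h3 ih => exact .lamApp ih h1 h2 h3
  | lamVar h h1 h2 h3 h4 h5 h6 h7 h8 ih => exact .lamVar ih h1 h2 h3 h4 h5 h6 h7 h8
  | lamGhost hflag h h1 h2 h3 h4 h5 h6 h7 ih => exact absurd hflag (by decide)
  | varC h h1 h2 h3 h4 h5 h6 h7 h8 h9 h10 ih =>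
      exact .varC ih h1 h2 h3 h4 h5 h6 h7 h8 h9 h10
  | varE hflag h h1 h2 h3 h4 h5 h6 h7 h8 h9 ih => exact absurd hflag (by decide)
  | ivarC h h1 h2 h3 h4 h5 h6 h7 h8 h9 h10 h11 ih =>
      exact .ivarC ih h1 (fun hh => absurd hh (by decide)) (fun _ => h3 rfl) h4 h5 h6 h7
        (fun hh => absurd hh (by decide)) (fun hh => absurd hh (by decide)) h10 h11
  | ivarE hflag h h1 h2 h3 h4 h5 h6 h7 h8 h9 h10 ih => exact absurd hflag (by decide)

theorem noeta_to_stlc {Γ₀ : Env} {T : CT} {A₀ : Ty} (D : WLd Γ₀ T A₀) :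
    ∀ {t : List Occ}, TravR T ⟨false, false, true, false, true⟩ t →
      TravR T ⟨false, false, false, false, false⟩ t := by
  intro t h
  induction h with
  | root => exact .root
  | app h h1 h2 ih => exact .app ih h1 h2
  | lamApp h h1 h2 h3 ih => exact .lamApp ih h1 h2 h3
  | lamVar h h1 h2 h3 h4 h5 h6 h7 h8 ih => exact .lamVar ih h1 h2 h3 h4 h5 h6 h7 h8
  | @lamGhost s gl nn aa hflag h hghost h2 h3 h4 h5 h6 h7 ih =>
      have hg := trav_good D h
      obtain ⟨p, hnode, -⟩ := hg gl s (List.suffix_refl _)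
      rw [hnode] at hghost
      exact absurd hghost (by simp [ENode.isGhost])
  | varC h h1 h2 h3 h4 h5 h6 h7 h8 h9 h10 ih =>
      exact .varC ih h1 h2 h3 h4 h5 h6 h7 h8 h9 h10
  | @varE s n a m hflag h hkindN hApp hd1 hjl1 haget hak hmget hmkind harity ih =>
      exact absurd harity (fun hc => varE_absurd D (trav_good D h) hkindN hApp hmget hc)
  | ivarC h h1 h2 h3 h4 h5 h6 h7 h8 h9 h10 h11 ih =>
      exact .ivarC ih h1 (fun hh => absurd hh (by decide)) (fun _ => h3 rfl) h4 h5 h6 h7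
        (fun hh => absurd hh (by decide)) (fun hh => absurd hh (by decide)) h10 h11
  | ivarE hflag h h1 h2 h3 h4 h5 h6 h7 h8 h9 h10 ih => exact absurd hflag (by decide)

theorem main_statement (Γ : List (Name × Ty)) (E : Term) (A : Ty) (h : ELong Γ E A) :
    (∀ s, TravSTLC (ctree E) s ↔ TravNoEtaIVar (ctree E) s) ∧
    (∀ s, TravNoEtaIVar (ctree E) s → ∀ o ∈ s, o.node.isGhost = false) := by
  obtain ⟨D⟩ := (elong_wt E).1 Γ A h
  constructor
  · intro s
    exact ⟨fun hs => stlc_to_noeta _ hs, fun hs => noeta_to_stlc D hs⟩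
  · intro s hs o ho
    have hg := trav_good D hs
    obtain ⟨l1, l2, rfl⟩ := List.append_of_mem ho
    obtain ⟨p, hnode, -⟩ := hg o l2 ⟨l1, rfl⟩
    rw [hnode]
    rfl

end ULCX


namespace Stmt3
open ULC

/-- For a simply-typed term-in-context in eta-long form
`E = ⌊M⌋`, the STLC traversals of `E` (rules of Table 1 without the ghost
rule `Lam^ghost` and without the eta-expanded subcases of `Var` and `IVar`)
coincide with the traversals of `E` generated by all rules except the
eta-expanded subcase of `IVar`; in particular no traversal in this set
contains a ghost node (so the condition `i > |m|` in rule `Var` never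
arises). -/
theorem stlc_traversals_coincide (Γ : List (Name × Ty)) (E : Term) (A : Ty)
    (h : ELong Γ E A) :
    (∀ s, TravSTLC (ctree E) s ↔ TravNoEtaIVar (ctree E) s) ∧
    (∀ s, TravNoEtaIVar (ctree E) s → ∀ o ∈ s, o.node.isGhost = false) :=
  ULCX.main_statement Γ E A h

end Stmt3
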